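/- arXiv:1404.3808 — 2 statements merged into one kernel-verified Lean document; each statement's English description precedes it below -/
import Mathlib

section
/- With the data, Riccati equation solution X (additionally assumed positive semidefinite) and gain K = −G_τ⁻¹(B₂ᵀX + L_τᵀ) as in the dissipation inequality setup, suppose measurable functions x : [0,∞) → ℝⁿ (continuously differentiable), ξⱼ : [0,∞) → ℝ^{pⱼ} and ηᵢ : [0,∞) → ℝ^{rᵢ} (continuous) satisfy: the closed-loop dynamics ẋ(t) = A x(t) + Σⱼ B₁ⱼ ξⱼ(t) + Σᵢ B̌₂ᵢ ηᵢ(t) + B₂ u(t) with u(t) = K x(t) and x(0) = x₀; and the integral quadratic constraints: for every T₀ ≥ 0 and each j = 1,…,k, ∫₀^{T₀} ( ‖ξⱼ(t)‖² − ‖C₁ⱼ x(t) + D₁ⱼ u(t)‖² ) dt ≤ x₀ᵀ S₁ⱼ x₀, and for each i = 1,…,g, ∫₀^{T₀} ( ‖ηᵢ(t)‖² − ‖Č₂ᵢ x(t) + Ď₂ᵢ u(t)‖² ) dt ≤ x₀ᵀ S̃₂ᵢ x₀, where S₁ⱼ and S̃₂ᵢ are given positive definite matrices. Then for every T₀ ≥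 0, ∫₀^{T₀} ( x(t)ᵀ R x(t) + u(t)ᵀ G u(t) ) dt ≤ x₀ᵀ X x₀ + Σⱼ τⱼ x₀ᵀ S₁ⱼ x₀ + Σᵢ x₀ᵀ S̃₂ᵢ x₀; i.e., the cost functional J = ∫₀^{∞} (xᵀRx + uᵀGu) dt is bounded by V_τ = x₀ᵀ X x₀ + Σⱼ τⱼ x₀ᵀ S₁ⱼ x₀ + Σᵢ x₀ᵀ S̃₂ᵢ x₀. -/
open Matrix MeasureTheory


lemma adjDot {a b : ℕ} (M : Matrix (Fin a) (Fin b) ℝ) (v : Fin a → ℝ) (w : Fin b → ℝ) :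
    (Mᵀ *ᵥ v) ⬝ᵥ w = v ⬝ᵥ (M *ᵥ w) := by
  rw [Matrix.mulVec_transpose, ← Matrix.dotProduct_mulVec]

lemma dmv {a b : ℕ} (M : Matrix (Fin a) (Fin b) ℝ) (v : Fin b → ℝ) (w : Fin a → ℝ) :
    (M *ᵥ v) ⬝ᵥ w = v ⬝ᵥ (Mᵀ *ᵥ w) := by
  rw [← adjDot Mᵀ, Matrix.transpose_transpose]

lemma symq {a b : ℕ} (M : Matrix (Fin a) (Fin b) ℝ) (v : Fin a → ℝ) (w : Fin b → ℝ) :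
    v ⬝ᵥ (M *ᵥ w) = w ⬝ᵥ (Mᵀ *ᵥ v) := by
  rw [← dmv, dotProduct_comm]

lemma sum_mulVec' {ι : Type*} (t : Finset ι) {a b : ℕ} (M : ι → Matrix (Fin a) (Fin b) ℝ)
    (v : Fin b → ℝ) : (∑ j ∈ t, M j) *ᵥ v = ∑ j ∈ t, M j *ᵥ v := by
  induction t using Finset.cons_induction with
  | empty => simp
  | cons c t hc ih => simp [Finset.sum_cons, Matrix.add_mulVec, ih]

lemma dot_sum' {ι : Type*} (t : Finset ι) {a : ℕ} (v : Fin a → ℝ) (w : ι → Fin a → ℝ) :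
    v ⬝ᵥ (∑ j ∈ t, w j) = ∑ j ∈ t, v ⬝ᵥ w j := by
  induction t using Finset.cons_induction with
  | empty => simp
  | cons c t hc ih => simp [Finset.sum_cons, dotProduct_add, ih]

lemma sq_dot {a : ℕ} (w : Fin a → ℝ) : ∑ i, w i ^ 2 = w ⬝ᵥ w := by
  simp [dotProduct, sq]

lemma dot_self_nonneg' {a : ℕ} (w : Fin a → ℝ) : 0 ≤ w ⬝ᵥ w :=
  Finset.sum_nonneg fun _ _ => mul_self_nonneg _

lemma psd_smul {a : ℕ} {D : Matrix (Fin a) (Fin a) ℝ} (h : D.PosSemidef) {c : ℝ} (hc : 0 ≤ c) :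
    (c • D).PosSemidef := by
  constructor
  · have hDT : Dᵀ = D := by
      have h1 := h.1
      simp [Matrix.conjTranspose_eq_transpose_of_trivial] at h1
      exact h1
    unfold Matrix.IsHermitian
    rw [Matrix.conjTranspose_smul]
    simp [Matrix.conjTranspose_eq_transpose_of_trivial, hDT]
  · exact (Matrix.PosSemidef.smul h hc).2

lemma psd_sum {ι : Type*} (t : Finset ι) {a : ℕ} (M : ι → Matrix (Fin a) (Fin a) ℝ)
    (h : ∀ j ∈ t, (M j).PosSemidef) : (∑ j ∈ t, M j).PosSemidef := by
  induction t using Finset.cons_induction with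
  | empty => simpa using Matrix.PosSemidef.zero
  | cons c t hc ih =>
      rw [Finset.sum_cons]
      exact (h c (Finset.mem_cons_self c t)).add (ih fun j hj => h j (Finset.mem_cons_of_mem hj))

lemma psd_tmul {a b : ℕ} (D : Matrix (Fin a) (Fin b) ℝ) : (Dᵀ * D).PosSemidef := by
  simpa [Matrix.conjTranspose_eq_transpose_of_trivial] using
    Matrix.posSemidef_conjTranspose_mul_self D

lemma contOn_dot {a : ℕ} {S : Set ℝ} {v w : ℝ → Fin a → ℝ}
    (hv : ContinuousOn v S) (hw : ContinuousOn w S) :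
    ContinuousOn (fun t => v t ⬝ᵥ w t) S := by
  simp only [dotProduct]
  exact continuousOn_finset_sum _ fun i _ =>
    (continuousOn_pi.1 hv i).mul (continuousOn_pi.1 hw i)

lemma contOn_mulVec {a b : ℕ} {S : Set ℝ} (M : Matrix (Fin a) (Fin b) ℝ) {v : ℝ → Fin b → ℝ}
    (hv : ContinuousOn v S) : ContinuousOn (fun t => M *ᵥ v t) S := by
  refine continuousOn_pi.2 fun i => ?_
  simp only [Matrix.mulVec, dotProduct]
  exact continuousOn_finset_sum _ fun j _ => continuousOn_const.mul (continuousOn_pi.1 hv j)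

lemma hasDerivAt_quadForm {n : ℕ} (X : Matrix (Fin n) (Fin n) ℝ) (x : ℝ → Fin n → ℝ)
    (f : Fin n → ℝ) (t : ℝ) (hx : HasDerivAt x f t) :
    HasDerivAt (fun s => x s ⬝ᵥ (X *ᵥ x s)) (f ⬝ᵥ (X *ᵥ x t) + x t ⬝ᵥ (X *ᵥ f)) t := by
  have hcoord : ∀ i, HasDerivAt (fun s => x s i) (f i) t := fun i => hasDerivAt_pi.1 hx i
  have hXc : ∀ i, HasDerivAt (fun s => (X *ᵥ x s) i) ((X *ᵥ f) i) t := by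
    intro i
    have : HasDerivAt (fun s => ∑ j, X i j * x s j) (∑ j, X i j * f j) t :=
      HasDerivAt.fun_sum (fun j _ => (hcoord j).const_mul (X i j))
    simpa [Matrix.mulVec, dotProduct] using this
  have h2 : HasDerivAt (fun s => ∑ i, x s i * (X *ᵥ x s) i)
      (∑ i, (f i * (X *ᵥ x t) i + x t i * (X *ᵥ f) i)) t :=
    HasDerivAt.fun_sum (fun i _ => (hcoord i).mul (hXc i))
  simpa [dotProduct, Finset.sum_add_distrib] using h2

lemma Nzero {n m : ℕ}
    (A X Qτ Wτ : Matrix (Fin n) (Fin n) ℝ) (B₂ Lτ : Matrix (Fin n) (Fin m) ℝ)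
    (Gτ : Matrix (Fin m) (Fin m) ℝ) (K : Matrix (Fin m) (Fin n) ℝ)
    (hXT : Xᵀ = X) (hGs : Gτᵀ = Gτ) (hdet : IsUnit Gτ.det)
    (hRic : (A - B₂ * Gτ⁻¹ * Lτᵀ)ᵀ * X + X * (A - B₂ * Gτ⁻¹ * Lτᵀ) +
      X * (Wτ - B₂ * Gτ⁻¹ * B₂ᵀ) * X + Qτ - Lτ * Gτ⁻¹ * Lτᵀ = 0)
    (hK : K = -(Gτ⁻¹ * (B₂ᵀ * X + Lτᵀ))) :
    Qτ + Lτ * K + Kᵀ * Lτᵀ + Kᵀ * Gτ * K + X * A + Aᵀ * X + X * B₂ * K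
      + Kᵀ * B₂ᵀ * X + X * Wτ * X = 0 := by
  have hGinv : (Gτ⁻¹)ᵀ = Gτ⁻¹ := by rw [Matrix.transpose_nonsing_inv, hGs]
  have hmulinv : Gτ * Gτ⁻¹ = 1 := Matrix.mul_nonsing_inv _ hdet
  have hKT : Kᵀ = -((X * B₂ + Lτ) * Gτ⁻¹) := by
    rw [hK]
    simp [Matrix.transpose_mul, hGinv, hXT, Matrix.add_mul, Matrix.mul_add]
  have hcol : ∀ Z : Matrix (Fin m) (Fin n) ℝ, Gτ * (Gτ⁻¹ * Z) = Z := by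
    intro Z; rw [← Matrix.mul_assoc, hmulinv, Matrix.one_mul]
  simp only [Matrix.transpose_sub, Matrix.transpose_mul, Matrix.transpose_transpose,
    hGinv, hXT, Matrix.sub_mul, Matrix.mul_sub, Matrix.mul_assoc] at hRic
  simp only [hK, hKT, Matrix.neg_mul, Matrix.mul_neg, Matrix.add_mul, Matrix.mul_add,
    Matrix.mul_assoc, hcol, Matrix.neg_mul, Matrix.mul_neg, neg_neg]
  abel_nf at hRic ⊢
  exact hRic

lemma Phi_zero {n m : ℕ}
    (A X Qτ Wτ : Matrix (Fin n) (Fin n) ℝ) (B₂ Lτ : Matrix (Fin n) (Fin m) ℝ)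
    (Gτ : Matrix (Fin m) (Fin m) ℝ) (K : Matrix (Fin m) (Fin n) ℝ)
    (hXT : Xᵀ = X)
    (hN : Qτ + Lτ * K + Kᵀ * Lτᵀ + Kᵀ * Gτ * K + X * A + Aᵀ * X + X * B₂ * K
      + Kᵀ * B₂ᵀ * X + X * Wτ * X = 0) (v : Fin n → ℝ) :
    v ⬝ᵥ (Qτ *ᵥ v) + 2 * (v ⬝ᵥ (Lτ *ᵥ (K *ᵥ v))) + (K *ᵥ v) ⬝ᵥ (Gτ *ᵥ (K *ᵥ v))
      + 2 * ((X *ᵥ v) ⬝ᵥ (A *ᵥ v)) + 2 * ((X *ᵥ v) ⬝ᵥ (B₂ *ᵥ (K *ᵥ v)))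
      + (X *ᵥ v) ⬝ᵥ (Wτ *ᵥ (X *ᵥ v)) = 0 := by
  have key := congrArg (fun M => v ⬝ᵥ (M *ᵥ v)) hN
  simp only [Matrix.add_mulVec, dotProduct_add, Matrix.zero_mulVec,
    dotProduct_zero] at key
  have e2 : v ⬝ᵥ (Lτ *ᵥ (K *ᵥ v)) = v ⬝ᵥ ((Lτ * K) *ᵥ v) := by rw [Matrix.mulVec_mulVec]
  have e2' : v ⬝ᵥ ((Lτ * K) *ᵥ v) = v ⬝ᵥ ((Kᵀ * Lτᵀ) *ᵥ v) := by
    rw [symq, Matrix.transpose_mul]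
  have e3 : (K *ᵥ v) ⬝ᵥ (Gτ *ᵥ (K *ᵥ v)) = v ⬝ᵥ ((Kᵀ * Gτ * K) *ᵥ v) := by
    rw [dmv, Matrix.mulVec_mulVec, Matrix.mulVec_mulVec, Matrix.mul_assoc]
  have e4 : (X *ᵥ v) ⬝ᵥ (A *ᵥ v) = v ⬝ᵥ ((X * A) *ᵥ v) := by
    rw [dmv, hXT, Matrix.mulVec_mulVec]
  have e4' : v ⬝ᵥ ((X * A) *ᵥ v) = v ⬝ᵥ ((Aᵀ * X) *ᵥ v) := by
    rw [symq, Matrix.transpose_mul, hXT]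
  have e5 : (X *ᵥ v) ⬝ᵥ (B₂ *ᵥ (K *ᵥ v)) = v ⬝ᵥ ((X * B₂ * K) *ᵥ v) := by
    rw [dmv, hXT, Matrix.mulVec_mulVec, Matrix.mulVec_mulVec, Matrix.mul_assoc]
  have e5' : v ⬝ᵥ ((X * B₂ * K) *ᵥ v) = v ⬝ᵥ ((Kᵀ * B₂ᵀ * X) *ᵥ v) := by
    rw [symq]; congr 1; simp [Matrix.transpose_mul, hXT, Matrix.mul_assoc]
  have e6 : (X *ᵥ v) ⬝ᵥ (Wτ *ᵥ (X *ᵥ v)) = v ⬝ᵥ ((X * Wτ * X) *ᵥ v) := by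
    rw [dmv, hXT, Matrix.mulVec_mulVec, Matrix.mulVec_mulVec, Matrix.mul_assoc]
  linarith [key]

lemma channel_sq {a b c d : ℕ} (τ : ℝ) (hτ : 0 < τ)
    (B : Matrix (Fin a) (Fin b) ℝ) (C : Matrix (Fin c) (Fin a) ℝ)
    (D : Matrix (Fin c) (Fin d) ℝ) (y v : Fin a → ℝ) (uu : Fin d → ℝ) (ξ : Fin b → ℝ) :
    τ * (ξ ⬝ᵥ ξ - (C *ᵥ v + D *ᵥ uu) ⬝ᵥ (C *ᵥ v + D *ᵥ uu)) =
      τ * ((ξ - τ⁻¹ • (Bᵀ *ᵥ y)) ⬝ᵥ (ξ - τ⁻¹ • (Bᵀ *ᵥ y)))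
        + 2 * (y ⬝ᵥ (B *ᵥ ξ)) - τ⁻¹ * (y ⬝ᵥ ((B * Bᵀ) *ᵥ y))
        - (τ * (v ⬝ᵥ ((Cᵀ * C) *ᵥ v)) + 2 * (τ * (v ⬝ᵥ ((Cᵀ * D) *ᵥ uu)))
            + τ * (uu ⬝ᵥ ((Dᵀ * D) *ᵥ uu))) := by
  have h1 : (Bᵀ *ᵥ y) ⬝ᵥ ξ = y ⬝ᵥ (B *ᵥ ξ) := adjDot B y ξ
  have h2 : ξ ⬝ᵥ (Bᵀ *ᵥ y) = y ⬝ᵥ (B *ᵥ ξ) := by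
    rw [dotProduct_comm]; exact h1
  have h3 : (Bᵀ *ᵥ y) ⬝ᵥ (Bᵀ *ᵥ y) = y ⬝ᵥ ((B * Bᵀ) *ᵥ y) := by
    rw [dmv, Matrix.transpose_transpose, Matrix.mulVec_mulVec]
  have h4 : (C *ᵥ v) ⬝ᵥ (C *ᵥ v) = v ⬝ᵥ ((Cᵀ * C) *ᵥ v) := by
    rw [dmv, Matrix.mulVec_mulVec]
  have h5 : (C *ᵥ v) ⬝ᵥ (D *ᵥ uu) = v ⬝ᵥ ((Cᵀ * D) *ᵥ uu) := by
    rw [dmv, Matrix.mulVec_mulVec]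
  have h6 : (D *ᵥ uu) ⬝ᵥ (C *ᵥ v) = v ⬝ᵥ ((Cᵀ * D) *ᵥ uu) := by
    rw [dotProduct_comm]; exact h5
  have h7 : (D *ᵥ uu) ⬝ᵥ (D *ᵥ uu) = uu ⬝ᵥ ((Dᵀ * D) *ᵥ uu) := by
    rw [dmv, Matrix.mulVec_mulVec]
  have hτ0 : τ ≠ 0 := ne_of_gt hτ
  simp only [dotProduct_add, add_dotProduct, dotProduct_sub,
    sub_dotProduct, dotProduct_smul, smul_dotProduct, smul_eq_mul,
    h1, h2, h3, h4, h5, h6, h7]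
  field_simp
  ring



lemma intInt_sum {ι : Type*} (t : Finset ι) {a b : ℝ} (F : ι → ℝ → ℝ)
    (h : ∀ j ∈ t, IntervalIntegrable (F j) volume a b) :
    IntervalIntegrable (fun x => ∑ j ∈ t, F j x) volume a b := by
  induction t using Finset.cons_induction with
  | empty => simpa using intervalIntegrable_const
  | cons c t hc ih =>
      simp only [Finset.sum_cons]
      exact (h c (Finset.mem_cons_self c t)).add (ih fun j hj => h j (Finset.mem_cons_of_mem hj))

lemma assemble {k g : ℕ} (T₀ : ℝ) (hT₀ : 0 ≤ T₀) (τ : Fin k → ℝ) (hτ : ∀ j, 0 < τ j)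
    (cost Vd : ℝ → ℝ) (g1 : Fin k → ℝ → ℝ) (g2 : Fin g → ℝ → ℝ)
    (hcostint : IntervalIntegrable cost volume 0 T₀)
    (hVdint : IntervalIntegrable Vd volume 0 T₀)
    (hg1int : ∀ j, IntervalIntegrable (g1 j) volume 0 T₀)
    (hg2int : ∀ i, IntervalIntegrable (g2 i) volume 0 T₀)
    (hpt : ∀ t ∈ Set.Icc (0:ℝ) T₀, cost t + Vd t ≤ (∑ j, τ j * g1 j t) + ∑ i, g2 i t)
    (b1 : Fin k → ℝ) (b2 : Fin g → ℝ)
    (hb1 : ∀ j, (∫ t in (0:ℝ)..T₀, g1 j t) ≤ b1 j)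
    (hb2 : ∀ i, (∫ t in (0:ℝ)..T₀, g2 i t) ≤ b2 i)
    (VT V0 : ℝ) (hFTC : (∫ t in (0:ℝ)..T₀, Vd t) = VT - V0) (hVT : 0 ≤ VT) :
    (∫ t in (0:ℝ)..T₀, cost t) ≤ V0 + (∑ j, τ j * b1 j) + ∑ i, b2 i := by
  have hs1 : IntervalIntegrable (fun t => ∑ j, τ j * g1 j t) volume 0 T₀ :=
    intInt_sum _ _ fun j _ => (hg1int j).const_mul (τ j)
  have hs2 : IntervalIntegrable (fun t => ∑ i, g2 i t) volume 0 T₀ :=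
    intInt_sum _ _ fun i _ => hg2int i
  have hmono := intervalIntegral.integral_mono_on hT₀ (hcostint.add hVdint) (hs1.add hs2) hpt
  rw [intervalIntegral.integral_add hcostint hVdint,
    intervalIntegral.integral_add hs1 hs2,
    intervalIntegral.integral_finset_sum (fun j _ => (hg1int j).const_mul (τ j)),
    intervalIntegral.integral_finset_sum (fun i _ => hg2int i)] at hmono
  have e1 : ∑ j, (∫ t in (0:ℝ)..T₀, τ j * g1 j t) = ∑ j, τ j * ∫ t in (0:ℝ)..T₀, g1 j t :=
    Finset.sum_congr rfl fun j _ => intervalIntegral.integral_const_mul _ _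
  rw [e1] at hmono
  have hB1 : ∑ j, τ j * (∫ t in (0:ℝ)..T₀, g1 j t) ≤ ∑ j, τ j * b1 j :=
    Finset.sum_le_sum fun j _ => mul_le_mul_of_nonneg_left (hb1 j) (hτ j).le
  have hB2 : ∑ i, (∫ t in (0:ℝ)..T₀, g2 i t) ≤ ∑ i, b2 i :=
    Finset.sum_le_sum fun i _ => hb2 i
  linarith

/-- pointwise dissipation inequality -/
lemma dissipation {n m k g : ℕ} {p : Fin k → ℕ} {q : Fin k → ℕ} {r : Fin g → ℕ} {s : Fin g → ℕ}
    (A : Matrix (Fin n) (Fin n) ℝ) (B₂ : Matrix (Fin n) (Fin m) ℝ)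
    (B₁ : ∀ j : Fin k, Matrix (Fin n) (Fin (p j)) ℝ)
    (C₁ : ∀ j : Fin k, Matrix (Fin (q j)) (Fin n) ℝ)
    (D₁ : ∀ j : Fin k, Matrix (Fin (q j)) (Fin m) ℝ)
    (B₂' : ∀ i : Fin g, Matrix (Fin n) (Fin (r i)) ℝ)
    (C₂ : ∀ i : Fin g, Matrix (Fin (s i)) (Fin n) ℝ)
    (D₂ : ∀ i : Fin g, Matrix (Fin (s i)) (Fin m) ℝ)
    (R : Matrix (Fin n) (Fin n) ℝ) (G : Matrix (Fin m) (Fin m) ℝ)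
    (τ : Fin k → ℝ) (hτ : ∀ j, 0 < τ j)
    (Gτ : Matrix (Fin m) (Fin m) ℝ)
    (hGτ : Gτ = G + (∑ j, τ j • ((D₁ j)ᵀ * D₁ j)) + ∑ i, (D₂ i)ᵀ * D₂ i)
    (Qτ : Matrix (Fin n) (Fin n) ℝ)
    (hQτ : Qτ = R + (∑ j, τ j • ((C₁ j)ᵀ * C₁ j)) + ∑ i, (C₂ i)ᵀ * C₂ i)
    (Lτ : Matrix (Fin n) (Fin m) ℝ)
    (hLτ : Lτ = (∑ j, τ j • ((C₁ j)ᵀ * D₁ j)) + ∑ i, (C₂ i)ᵀ * D₂ i)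
    (Wτ : Matrix (Fin n) (Fin n) ℝ)
    (hWτ : Wτ = (∑ j, (τ j)⁻¹ • (B₁ j * (B₁ j)ᵀ)) + ∑ i, B₂' i * (B₂' i)ᵀ)
    (X : Matrix (Fin n) (Fin n) ℝ) (hXT : Xᵀ = X)
    (K : Matrix (Fin m) (Fin n) ℝ)
    (hN : Qτ + Lτ * K + Kᵀ * Lτᵀ + Kᵀ * Gτ * K + X * A + Aᵀ * X + X * B₂ * K
      + Kᵀ * B₂ᵀ * X + X * Wτ * X = 0)
    (v : Fin n → ℝ) (ξv : ∀ j : Fin k, Fin (p j) → ℝ) (ηv : ∀ i : Fin g, Fin (r i) → ℝ)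
    (uu : Fin m → ℝ) (huu : uu = K *ᵥ v)
    (f : Fin n → ℝ)
    (hf : f = A *ᵥ v + (∑ j, B₁ j *ᵥ ξv j) + (∑ i, B₂' i *ᵥ ηv i) + B₂ *ᵥ uu) :
    v ⬝ᵥ (R *ᵥ v) + uu ⬝ᵥ (G *ᵥ uu) + (f ⬝ᵥ (X *ᵥ v) + v ⬝ᵥ (X *ᵥ f)) ≤
      (∑ j, τ j * ((∑ a, ξv j a ^ 2) - ∑ a, ((C₁ j *ᵥ v + D₁ j *ᵥ uu) a) ^ 2)) +
        ∑ i, ((∑ a, ηv i a ^ 2) - ∑ a, ((C₂ i *ᵥ v + D₂ i *ᵥ uu) a) ^ 2) := by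
  set y := X *ᵥ v with hy
  -- channel identities, summed
  have hsum1 : ∑ j, τ j * ((∑ a, ξv j a ^ 2) - ∑ a, ((C₁ j *ᵥ v + D₁ j *ᵥ uu) a) ^ 2)
      = (∑ j, τ j * ((ξv j - (τ j)⁻¹ • ((B₁ j)ᵀ *ᵥ y)) ⬝ᵥ (ξv j - (τ j)⁻¹ • ((B₁ j)ᵀ *ᵥ y))))
        + 2 * (∑ j, y ⬝ᵥ (B₁ j *ᵥ ξv j))
        - (∑ j, (τ j)⁻¹ * (y ⬝ᵥ ((B₁ j * (B₁ j)ᵀ) *ᵥ y)))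
        - ((∑ j, τ j * (v ⬝ᵥ (((C₁ j)ᵀ * C₁ j) *ᵥ v)))
            + 2 * (∑ j, τ j * (v ⬝ᵥ (((C₁ j)ᵀ * D₁ j) *ᵥ uu)))
            + ∑ j, τ j * (uu ⬝ᵥ (((D₁ j)ᵀ * D₁ j) *ᵥ uu))) := by
    have hper : ∀ j ∈ Finset.univ, τ j * ((∑ a, ξv j a ^ 2) - ∑ a, ((C₁ j *ᵥ v + D₁ j *ᵥ uu) a) ^ 2)
        = τ j * ((ξv j - (τ j)⁻¹ • ((B₁ j)ᵀ *ᵥ y)) ⬝ᵥ (ξv j - (τ j)⁻¹ • ((B₁ j)ᵀ *ᵥ y)))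
          + 2 * (y ⬝ᵥ (B₁ j *ᵥ ξv j)) - (τ j)⁻¹ * (y ⬝ᵥ ((B₁ j * (B₁ j)ᵀ) *ᵥ y))
          - (τ j * (v ⬝ᵥ (((C₁ j)ᵀ * C₁ j) *ᵥ v)) + 2 * (τ j * (v ⬝ᵥ (((C₁ j)ᵀ * D₁ j) *ᵥ uu)))
              + τ j * (uu ⬝ᵥ (((D₁ j)ᵀ * D₁ j) *ᵥ uu))) := by
      intro j _
      rw [sq_dot, sq_dot]
      exact channel_sq (τ j) (hτ j) (B₁ j) (C₁ j) (D₁ j) y v uu (ξv j)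
    rw [Finset.sum_congr rfl hper]
    simp only [Finset.sum_add_distrib, Finset.sum_sub_distrib, ← Finset.mul_sum]
  have hsum2 : ∑ i, ((∑ a, ηv i a ^ 2) - ∑ a, ((C₂ i *ᵥ v + D₂ i *ᵥ uu) a) ^ 2)
      = (∑ i, ((ηv i - (1:ℝ)⁻¹ • ((B₂' i)ᵀ *ᵥ y)) ⬝ᵥ (ηv i - (1:ℝ)⁻¹ • ((B₂' i)ᵀ *ᵥ y))))
        + 2 * (∑ i, y ⬝ᵥ (B₂' i *ᵥ ηv i))
        - (∑ i, y ⬝ᵥ ((B₂' i * (B₂' i)ᵀ) *ᵥ y))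
        - ((∑ i, v ⬝ᵥ (((C₂ i)ᵀ * C₂ i) *ᵥ v))
            + 2 * (∑ i, v ⬝ᵥ (((C₂ i)ᵀ * D₂ i) *ᵥ uu))
            + ∑ i, uu ⬝ᵥ (((D₂ i)ᵀ * D₂ i) *ᵥ uu)) := by
    have hper : ∀ i ∈ Finset.univ, ((∑ a, ηv i a ^ 2) - ∑ a, ((C₂ i *ᵥ v + D₂ i *ᵥ uu) a) ^ 2)
        = ((ηv i - (1:ℝ)⁻¹ • ((B₂' i)ᵀ *ᵥ y)) ⬝ᵥ (ηv i - (1:ℝ)⁻¹ • ((B₂' i)ᵀ *ᵥ y)))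
          + 2 * (y ⬝ᵥ (B₂' i *ᵥ ηv i)) - (y ⬝ᵥ ((B₂' i * (B₂' i)ᵀ) *ᵥ y))
          - (v ⬝ᵥ (((C₂ i)ᵀ * C₂ i) *ᵥ v) + 2 * (v ⬝ᵥ (((C₂ i)ᵀ * D₂ i) *ᵥ uu))
              + uu ⬝ᵥ (((D₂ i)ᵀ * D₂ i) *ᵥ uu)) := by
      intro i _
      rw [sq_dot, sq_dot]
      have := channel_sq (1:ℝ) one_pos (B₂' i) (C₂ i) (D₂ i) y v uu (ηv i)
      linarith [this]
    rw [Finset.sum_congr rfl hper]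
    simp only [Finset.sum_add_distrib, Finset.sum_sub_distrib, ← Finset.mul_sum]
  -- matrix-sum foldings
  have hSB : y ⬝ᵥ ((∑ j, (τ j)⁻¹ • (B₁ j * (B₁ j)ᵀ)) *ᵥ y)
      = ∑ j, (τ j)⁻¹ * (y ⬝ᵥ ((B₁ j * (B₁ j)ᵀ) *ᵥ y)) := by
    rw [sum_mulVec', dot_sum']
    simp [Matrix.smul_mulVec, dotProduct_smul]
  have hSB2 : y ⬝ᵥ ((∑ i, B₂' i * (B₂' i)ᵀ) *ᵥ y)
      = ∑ i, y ⬝ᵥ ((B₂' i * (B₂' i)ᵀ) *ᵥ y) := by rw [sum_mulVec', dot_sum']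
  have hSC : v ⬝ᵥ ((∑ j, τ j • ((C₁ j)ᵀ * C₁ j)) *ᵥ v)
      = ∑ j, τ j * (v ⬝ᵥ (((C₁ j)ᵀ * C₁ j) *ᵥ v)) := by
    rw [sum_mulVec', dot_sum']
    simp [Matrix.smul_mulVec, dotProduct_smul]
  have hSC2 : v ⬝ᵥ ((∑ i, (C₂ i)ᵀ * C₂ i) *ᵥ v)
      = ∑ i, v ⬝ᵥ (((C₂ i)ᵀ * C₂ i) *ᵥ v) := by rw [sum_mulVec', dot_sum']
  have hSL : v ⬝ᵥ ((∑ j, τ j • ((C₁ j)ᵀ * D₁ j)) *ᵥ uu)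
      = ∑ j, τ j * (v ⬝ᵥ (((C₁ j)ᵀ * D₁ j) *ᵥ uu)) := by
    rw [sum_mulVec', dot_sum']
    simp [Matrix.smul_mulVec, dotProduct_smul]
  have hSL2 : v ⬝ᵥ ((∑ i, (C₂ i)ᵀ * D₂ i) *ᵥ uu)
      = ∑ i, v ⬝ᵥ (((C₂ i)ᵀ * D₂ i) *ᵥ uu) := by rw [sum_mulVec', dot_sum']
  have hSD : uu ⬝ᵥ ((∑ j, τ j • ((D₁ j)ᵀ * D₁ j)) *ᵥ uu)
      = ∑ j, τ j * (uu ⬝ᵥ (((D₁ j)ᵀ * D₁ j) *ᵥ uu)) := by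
    rw [sum_mulVec', dot_sum']
    simp [Matrix.smul_mulVec, dotProduct_smul]
  have hSD2 : uu ⬝ᵥ ((∑ i, (D₂ i)ᵀ * D₂ i) *ᵥ uu)
      = ∑ i, uu ⬝ᵥ (((D₂ i)ᵀ * D₂ i) *ᵥ uu) := by rw [sum_mulVec', dot_sum']
  have hBξ : ∑ j, y ⬝ᵥ (B₁ j *ᵥ ξv j) = y ⬝ᵥ (∑ j, B₁ j *ᵥ ξv j) := (dot_sum' _ _ _).symm
  have hBη : ∑ i, y ⬝ᵥ (B₂' i *ᵥ ηv i) = y ⬝ᵥ (∑ i, B₂' i *ᵥ ηv i) := (dot_sum' _ _ _).symm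
  -- decomposition of the composite matrices
  have hQ : v ⬝ᵥ (Qτ *ᵥ v) = v ⬝ᵥ (R *ᵥ v)
      + v ⬝ᵥ ((∑ j, τ j • ((C₁ j)ᵀ * C₁ j)) *ᵥ v) + v ⬝ᵥ ((∑ i, (C₂ i)ᵀ * C₂ i) *ᵥ v) := by
    rw [hQτ]; simp [Matrix.add_mulVec, dotProduct_add]
  have hGd : uu ⬝ᵥ (Gτ *ᵥ uu) = uu ⬝ᵥ (G *ᵥ uu)
      + uu ⬝ᵥ ((∑ j, τ j • ((D₁ j)ᵀ * D₁ j)) *ᵥ uu)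
      + uu ⬝ᵥ ((∑ i, (D₂ i)ᵀ * D₂ i) *ᵥ uu) := by
    rw [hGτ]; simp [Matrix.add_mulVec, dotProduct_add]
  have hLd : v ⬝ᵥ (Lτ *ᵥ uu) = v ⬝ᵥ ((∑ j, τ j • ((C₁ j)ᵀ * D₁ j)) *ᵥ uu)
      + v ⬝ᵥ ((∑ i, (C₂ i)ᵀ * D₂ i) *ᵥ uu) := by
    rw [hLτ]; simp [Matrix.add_mulVec, dotProduct_add]
  have hWd : y ⬝ᵥ (Wτ *ᵥ y) = y ⬝ᵥ ((∑ j, (τ j)⁻¹ • (B₁ j * (B₁ j)ᵀ)) *ᵥ y)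
      + y ⬝ᵥ ((∑ i, B₂' i * (B₂' i)ᵀ) *ᵥ y) := by
    rw [hWτ]; simp [Matrix.add_mulVec, dotProduct_add]
  -- derivative of V
  have hVdot : f ⬝ᵥ (X *ᵥ v) + v ⬝ᵥ (X *ᵥ f)
      = 2 * (y ⬝ᵥ (A *ᵥ v)) + 2 * (y ⬝ᵥ (∑ j, B₁ j *ᵥ ξv j))
        + 2 * (y ⬝ᵥ (∑ i, B₂' i *ᵥ ηv i)) + 2 * (y ⬝ᵥ (B₂ *ᵥ uu)) := by
    have h1 : v ⬝ᵥ (X *ᵥ f) = f ⬝ᵥ (X *ᵥ v) := by rw [symq, hXT]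
    have h2 : f ⬝ᵥ (X *ᵥ v) = y ⬝ᵥ f := dotProduct_comm _ _
    rw [h1, h2, hf]
    simp only [dotProduct_add]
    ring
  -- Riccati quadratic form vanishes
  have hΦ : v ⬝ᵥ (Qτ *ᵥ v) + 2 * (v ⬝ᵥ (Lτ *ᵥ uu)) + uu ⬝ᵥ (Gτ *ᵥ uu)
      + 2 * (y ⬝ᵥ (A *ᵥ v)) + 2 * (y ⬝ᵥ (B₂ *ᵥ uu)) + y ⬝ᵥ (Wτ *ᵥ y) = 0 := by
    rw [huu, hy]
    exact Phi_zero A X Qτ Wτ B₂ Lτ Gτ K hXT hN v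
  -- nonnegativity of the completed squares
  have hnn1 : 0 ≤ ∑ j, τ j * ((ξv j - (τ j)⁻¹ • ((B₁ j)ᵀ *ᵥ y)) ⬝ᵥ
      (ξv j - (τ j)⁻¹ • ((B₁ j)ᵀ *ᵥ y))) :=
    Finset.sum_nonneg fun j _ => mul_nonneg (le_of_lt (hτ j)) (dot_self_nonneg' _)
  have hnn2 : 0 ≤ ∑ i, ((ηv i - (1:ℝ)⁻¹ • ((B₂' i)ᵀ *ᵥ y)) ⬝ᵥ
      (ηv i - (1:ℝ)⁻¹ • ((B₂' i)ᵀ *ᵥ y))) :=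
    Finset.sum_nonneg fun i _ => dot_self_nonneg' _
  linarith [hsum1, hsum2, hSB, hSB2, hSC, hSC2, hSL, hSL2, hSD, hSD2, hBξ, hBη,
    hQ, hGd, hLd, hWd, hVdot, hΦ, hnn1, hnn2]

/-- Guaranteed cost bound for the minimax LQR state feedback controller
(part (i) of the paper's main theorem): along any closed-loop trajectory with `u = Kx`,
if the uncertainty signals satisfy the normalized IQCs, then for every horizon `T₀ ≥ 0`
the cost satisfies
`∫₀^{T₀}(xᵀRx + uᵀGu) dt ≤ x₀ᵀXx₀ + Σⱼ τⱼ x₀ᵀS₁ⱼx₀ + Σᵢ x₀ᵀS̃₂ᵢx₀`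
(Euclidean norms written as sums of squares). -/
theorem stmt9 (n m k g : ℕ) (p q : Fin k → ℕ) (r s : Fin g → ℕ)
    (A : Matrix (Fin n) (Fin n) ℝ) (B₂ : Matrix (Fin n) (Fin m) ℝ)
    (B₁ : ∀ j : Fin k, Matrix (Fin n) (Fin (p j)) ℝ)
    (C₁ : ∀ j : Fin k, Matrix (Fin (q j)) (Fin n) ℝ)
    (D₁ : ∀ j : Fin k, Matrix (Fin (q j)) (Fin m) ℝ)
    (B₂' : ∀ i : Fin g, Matrix (Fin n) (Fin (r i)) ℝ)
    (C₂ : ∀ i : Fin g, Matrix (Fin (s i)) (Fin n) ℝ)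
    (D₂ : ∀ i : Fin g, Matrix (Fin (s i)) (Fin m) ℝ)
    (R : Matrix (Fin n) (Fin n) ℝ) (hR : R.PosDef)
    (G : Matrix (Fin m) (Fin m) ℝ) (hG : G.PosDef)
    (τ : Fin k → ℝ) (hτ : ∀ j, 0 < τ j)
    (Gτ : Matrix (Fin m) (Fin m) ℝ)
    (hGτ : Gτ = G + (∑ j, τ j • ((D₁ j)ᵀ * D₁ j)) + ∑ i, (D₂ i)ᵀ * D₂ i)
    (Qτ : Matrix (Fin n) (Fin n) ℝ)
    (hQτ : Qτ = R + (∑ j, τ j • ((C₁ j)ᵀ * C₁ j)) + ∑ i, (C₂ i)ᵀ * C₂ i)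
    (Lτ : Matrix (Fin n) (Fin m) ℝ)
    (hLτ : Lτ = (∑ j, τ j • ((C₁ j)ᵀ * D₁ j)) + ∑ i, (C₂ i)ᵀ * D₂ i)
    (Wτ : Matrix (Fin n) (Fin n) ℝ)
    (hWτ : Wτ = (∑ j, (τ j)⁻¹ • (B₁ j * (B₁ j)ᵀ)) + ∑ i, B₂' i * (B₂' i)ᵀ)
    (X : Matrix (Fin n) (Fin n) ℝ) (hXsymm : X.IsSymm) (hXpsd : X.PosSemidef)
    (hRic : (A - B₂ * Gτ⁻¹ * Lτᵀ)ᵀ * X + X * (A - B₂ * Gτ⁻¹ * Lτᵀ) +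
      X * (Wτ - B₂ * Gτ⁻¹ * B₂ᵀ) * X + Qτ - Lτ * Gτ⁻¹ * Lτᵀ = 0)
    (K : Matrix (Fin m) (Fin n) ℝ) (hK : K = -(Gτ⁻¹ * (B₂ᵀ * X + Lτᵀ)))
    -- closed-loop trajectory
    (x : ℝ → Fin n → ℝ) (ξ : ∀ j : Fin k, ℝ → Fin (p j) → ℝ)
    (η : ∀ i : Fin g, ℝ → Fin (r i) → ℝ)
    (u : ℝ → Fin m → ℝ) (hu : ∀ t, u t = K *ᵥ x t)
    (x₀ : Fin n → ℝ) (hx0 : x 0 = x₀)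
    (hdyn : ∀ t, 0 ≤ t → HasDerivAt x
      (A *ᵥ x t + (∑ j, B₁ j *ᵥ ξ j t) + (∑ i, B₂' i *ᵥ η i t) + B₂ *ᵥ u t) t)
    (hξc : ∀ j, ContinuousOn (ξ j) (Set.Ici (0:ℝ)))
    (hηc : ∀ i, ContinuousOn (η i) (Set.Ici (0:ℝ)))
    -- integral quadratic constraints
    (S₁ : ∀ _ : Fin k, Matrix (Fin n) (Fin n) ℝ) (hS₁ : ∀ j, (S₁ j).PosDef)
    (S₂ : ∀ _ : Fin g, Matrix (Fin n) (Fin n) ℝ) (hS₂ : ∀ i, (S₂ i).PosDef)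
    (hIQC1 : ∀ T₀, 0 ≤ T₀ → ∀ j,
      (∫ t in (0:ℝ)..T₀,
        ((∑ a, ξ j t a ^ 2) - ∑ a, ((C₁ j *ᵥ x t + D₁ j *ᵥ u t) a) ^ 2)) ≤
          x₀ ⬝ᵥ (S₁ j *ᵥ x₀))
    (hIQC2 : ∀ T₀, 0 ≤ T₀ → ∀ i,
      (∫ t in (0:ℝ)..T₀,
        ((∑ a, η i t a ^ 2) - ∑ a, ((C₂ i *ᵥ x t + D₂ i *ᵥ u t) a) ^ 2)) ≤
          x₀ ⬝ᵥ (S₂ i *ᵥ x₀)) :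
    -- guaranteed cost bound
    ∀ T₀, 0 ≤ T₀ →
      (∫ t in (0:ℝ)..T₀, (x t ⬝ᵥ (R *ᵥ x t) + u t ⬝ᵥ (G *ᵥ u t))) ≤
        x₀ ⬝ᵥ (X *ᵥ x₀) + (∑ j, τ j * (x₀ ⬝ᵥ (S₁ j *ᵥ x₀))) +
          ∑ i, x₀ ⬝ᵥ (S₂ i *ᵥ x₀) := by
  intro T₀ hT₀
  have hIcc : Set.uIcc (0:ℝ) T₀ = Set.Icc 0 T₀ := Set.uIcc_of_le hT₀
  -- positive definiteness and symmetry of Gτ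
  have hGτpd : Gτ.PosDef := by
    rw [hGτ]
    exact (hG.add_posSemidef (psd_sum _ _ fun j _ =>
      psd_smul (psd_tmul (D₁ j)) (hτ j).le)).add_posSemidef
      (psd_sum _ _ fun i _ => psd_tmul (D₂ i))
  have hdet : IsUnit Gτ.det := isUnit_iff_ne_zero.mpr hGτpd.det_pos.ne'
  have hGs : Gτᵀ = Gτ := by
    have h1 := hGτpd.1
    simp [Matrix.conjTranspose_eq_transpose_of_trivial] at h1
    exact h1
  have hXT : Xᵀ = X := hXsymm
  have hN := Nzero A X Qτ Wτ B₂ Lτ Gτ K hXT hGs hdet hRic hK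
  -- continuity facts
  have hSsub : Set.Icc (0:ℝ) T₀ ⊆ Set.Ici 0 := Set.Icc_subset_Ici_self
  have hxc : ContinuousOn x (Set.Icc 0 T₀) := fun t ht =>
    ((hdyn t ht.1).continuousAt).continuousWithinAt
  have hueq : u = fun t => K *ᵥ x t := funext hu
  have huc : ContinuousOn u (Set.Icc 0 T₀) := by rw [hueq]; exact contOn_mulVec K hxc
  have hξc' : ∀ j, ContinuousOn (ξ j) (Set.Icc 0 T₀) := fun j => (hξc j).mono hSsub
  have hηc' : ∀ i, ContinuousOn (η i) (Set.Icc 0 T₀) := fun i => (hηc i).mono hSsub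
  have hfc : ContinuousOn (fun t => A *ᵥ x t + (∑ j, B₁ j *ᵥ ξ j t)
      + (∑ i, B₂' i *ᵥ η i t) + B₂ *ᵥ u t) (Set.Icc 0 T₀) :=
    (((contOn_mulVec A hxc).add (continuousOn_finset_sum _ fun j _ =>
      contOn_mulVec (B₁ j) (hξc' j))).add (continuousOn_finset_sum _ fun i _ =>
      contOn_mulVec (B₂' i) (hηc' i))).add (contOn_mulVec B₂ huc)
  -- integrability facts
  have hcostint : IntervalIntegrable
      (fun t => x t ⬝ᵥ (R *ᵥ x t) + u t ⬝ᵥ (G *ᵥ u t)) volume 0 T₀ := by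
    apply ContinuousOn.intervalIntegrable
    rw [hIcc]
    exact (contOn_dot hxc (contOn_mulVec R hxc)).add (contOn_dot huc (contOn_mulVec G huc))
  have hVdint : IntervalIntegrable (fun t =>
      (A *ᵥ x t + (∑ j, B₁ j *ᵥ ξ j t) + (∑ i, B₂' i *ᵥ η i t) + B₂ *ᵥ u t) ⬝ᵥ (X *ᵥ x t)
      + x t ⬝ᵥ (X *ᵥ (A *ᵥ x t + (∑ j, B₁ j *ᵥ ξ j t) + (∑ i, B₂' i *ᵥ η i t) + B₂ *ᵥ u t)))
      volume 0 T₀ := by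
    apply ContinuousOn.intervalIntegrable
    rw [hIcc]
    exact (contOn_dot hfc (contOn_mulVec X hxc)).add (contOn_dot hxc (contOn_mulVec X hfc))
  have hg1int : ∀ j, IntervalIntegrable (fun t =>
      (∑ a, ξ j t a ^ 2) - ∑ a, ((C₁ j *ᵥ x t + D₁ j *ᵥ u t) a) ^ 2) volume 0 T₀ := by
    intro j
    have e : (fun t => (∑ a, ξ j t a ^ 2) - ∑ a, ((C₁ j *ᵥ x t + D₁ j *ᵥ u t) a) ^ 2)
        = fun t => (ξ j t ⬝ᵥ ξ j t) -
          ((C₁ j *ᵥ x t + D₁ j *ᵥ u t) ⬝ᵥ (C₁ j *ᵥ x t + D₁ j *ᵥ u t)) :=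
      funext fun t => by rw [sq_dot, sq_dot]
    rw [e]
    apply ContinuousOn.intervalIntegrable
    rw [hIcc]
    have hwc : ContinuousOn (fun t => C₁ j *ᵥ x t + D₁ j *ᵥ u t) (Set.Icc 0 T₀) :=
      (contOn_mulVec _ hxc).add (contOn_mulVec _ huc)
    exact (contOn_dot (hξc' j) (hξc' j)).sub (contOn_dot hwc hwc)
  have hg2int : ∀ i, IntervalIntegrable (fun t =>
      (∑ a, η i t a ^ 2) - ∑ a, ((C₂ i *ᵥ x t + D₂ i *ᵥ u t) a) ^ 2) volume 0 T₀ := by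
    intro i
    have e : (fun t => (∑ a, η i t a ^ 2) - ∑ a, ((C₂ i *ᵥ x t + D₂ i *ᵥ u t) a) ^ 2)
        = fun t => (η i t ⬝ᵥ η i t) -
          ((C₂ i *ᵥ x t + D₂ i *ᵥ u t) ⬝ᵥ (C₂ i *ᵥ x t + D₂ i *ᵥ u t)) :=
      funext fun t => by rw [sq_dot, sq_dot]
    rw [e]
    apply ContinuousOn.intervalIntegrable
    rw [hIcc]
    have hwc : ContinuousOn (fun t => C₂ i *ᵥ x t + D₂ i *ᵥ u t) (Set.Icc 0 T₀) :=
      (contOn_mulVec _ hxc).add (contOn_mulVec _ huc)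
    exact (contOn_dot (hηc' i) (hηc' i)).sub (contOn_dot hwc hwc)
  -- pointwise dissipation inequality
  have hpt : ∀ t ∈ Set.Icc (0:ℝ) T₀,
      (x t ⬝ᵥ (R *ᵥ x t) + u t ⬝ᵥ (G *ᵥ u t))
        + ((A *ᵥ x t + (∑ j, B₁ j *ᵥ ξ j t) + (∑ i, B₂' i *ᵥ η i t) + B₂ *ᵥ u t) ⬝ᵥ (X *ᵥ x t)
          + x t ⬝ᵥ (X *ᵥ (A *ᵥ x t + (∑ j, B₁ j *ᵥ ξ j t) + (∑ i, B₂' i *ᵥ η i t) + B₂ *ᵥ u t)))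
      ≤ (∑ j, τ j * ((∑ a, ξ j t a ^ 2) - ∑ a, ((C₁ j *ᵥ x t + D₁ j *ᵥ u t) a) ^ 2))
        + ∑ i, ((∑ a, η i t a ^ 2) - ∑ a, ((C₂ i *ᵥ x t + D₂ i *ᵥ u t) a) ^ 2) := by
    intro t _
    exact dissipation A B₂ B₁ C₁ D₁ B₂' C₂ D₂ R G τ hτ Gτ hGτ Qτ hQτ Lτ hLτ Wτ hWτ X hXT K hN
      (x t) (fun j => ξ j t) (fun i => η i t) (u t) (hu t) _ rfl
  -- fundamental theorem of calculus for the storage function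
  have hVdIcc : ∀ t ∈ Set.uIcc (0:ℝ) T₀, HasDerivAt (fun s => x s ⬝ᵥ (X *ᵥ x s))
      ((A *ᵥ x t + (∑ j, B₁ j *ᵥ ξ j t) + (∑ i, B₂' i *ᵥ η i t) + B₂ *ᵥ u t) ⬝ᵥ (X *ᵥ x t)
        + x t ⬝ᵥ (X *ᵥ (A *ᵥ x t + (∑ j, B₁ j *ᵥ ξ j t) + (∑ i, B₂' i *ᵥ η i t) + B₂ *ᵥ u t))) t := by
    intro t ht
    rw [hIcc] at ht
    exact hasDerivAt_quadForm X x _ t (hdyn t ht.1)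
  have hFTC : (∫ t in (0:ℝ)..T₀,
      ((A *ᵥ x t + (∑ j, B₁ j *ᵥ ξ j t) + (∑ i, B₂' i *ᵥ η i t) + B₂ *ᵥ u t) ⬝ᵥ (X *ᵥ x t)
        + x t ⬝ᵥ (X *ᵥ (A *ᵥ x t + (∑ j, B₁ j *ᵥ ξ j t) + (∑ i, B₂' i *ᵥ η i t) + B₂ *ᵥ u t))))
      = x T₀ ⬝ᵥ (X *ᵥ x T₀) - x₀ ⬝ᵥ (X *ᵥ x₀) := by
    rw [intervalIntegral.integral_eq_sub_of_hasDerivAt hVdIcc hVdint, hx0]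
  have hVT : 0 ≤ x T₀ ⬝ᵥ (X *ᵥ x T₀) := by simpa using hXpsd.dotProduct_mulVec_nonneg (x T₀)
  exact assemble T₀ hT₀ τ hτ _ _ _ _ hcostint hVdint hg1int hg2int hpt _ _
    (fun j => hIQC1 T₀ hT₀ j) (fun i => hIQC2 T₀ hT₀ i)
    (x T₀ ⬝ᵥ (X *ᵥ x T₀)) (x₀ ⬝ᵥ (X *ᵥ x₀)) hFTC hVT
end

section
/- Consider the uncertain linear system with direct feedthrough in the nonlinearity channels: ẋ(t) = Ā x(t) + Σⱼ B₁ⱼ ξⱼ(t) + Σᵢ B̄₂ᵢ ξ̄ᵢ(t) + B̄₂ u(t), with uncertainty outputs ζⱼ(t) = C₁ⱼ x(t) + D₁ⱼ u(t) and nonlinearity-channel outputs ζ̄ᵢ(t) = C̄₂ᵢ x(t) + D̄₂ᵢ u(t) + D̄₁₁ᵢ ξ̄ᵢ(t), where for each i the feedthrough satisfies D̄₁₁ᵢᵀ D̄₁₁ᵢ < I (so Φᵢ = I − D̄₁₁ᵢᵀD̄₁₁ᵢ and Φ̄ᵢ = I − D̄₁₁ᵢD̄₁₁ᵢᵀ are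 positive definite). Suppose the signals satisfy, for all T₀ ≥ 0, the IQCs ∫₀^{T₀}(‖ξⱼ‖² − ‖ζⱼ‖²)dt ≤ x₀ᵀS₁ⱼx₀ and ∫₀^{T₀}(‖ξ̄ᵢ‖² − ‖ζ̄ᵢ‖²)dt ≤ x₀ᵀS̃₂ᵢx₀ with S₁ⱼ, S̃₂ᵢ positive definite. Define the loop-shifted data Ǎ = Ā + Σᵢ B̄₂ᵢ Φᵢ⁻¹ D̄₁₁ᵢᵀ C̄₂ᵢ, B̌₂ᵢ = B̄₂ᵢ Φᵢ^{-1/2}, B̌₂ = B̄₂ + Σᵢ B̄₂ᵢ Φᵢ⁻¹ D̄₁₁ᵢᵀ D̄₂ᵢ, Č₂ᵢ = Φ̄ᵢ^{-1/2} C̄₂ᵢ, Ď₂ᵢ = Φ̄ᵢ^{-1/2} D̄₂ᵢ. Suppose X positive semidefinite solves the algebraic Riccati equation for the data (Ǎ, B̌₂, B₁ⱼ, C₁ⱼ, D₁ⱼ, B̌₂ᵢ, Č₂ᵢ, Ď₂ᵢ, R, G, τⱼ) (in expanded form: (Ǎ − B̌₂G_τ⁻¹L_τᵀ)ᵀX +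 X(Ǎ − B̌₂G_τ⁻¹L_τᵀ) + X(W_τ − B̌₂G_τ⁻¹B̌₂ᵀ)X + Q_τ − L_τG_τ⁻¹L_τᵀ = 0 with G_τ = G + ΣⱼτⱼD₁ⱼᵀD₁ⱼ + ΣᵢĎ₂ᵢᵀĎ₂ᵢ, Q_τ = R + ΣⱼτⱼC₁ⱼᵀC₁ⱼ + ΣᵢČ₂ᵢᵀČ₂ᵢ, L_τ = ΣⱼτⱼC₁ⱼᵀD₁ⱼ + ΣᵢČ₂ᵢᵀĎ₂ᵢ, W_τ = Σⱼ(1/τⱼ)B₁ⱼB₁ⱼᵀ + ΣᵢB̌₂ᵢB̌₂ᵢᵀ), and the control is u(t) = K x(t) with K = −G_τ⁻¹(B̌₂ᵀX + L_τᵀ). Then for every T₀ ≥ 0, ∫₀^{T₀}( x(t)ᵀ R x(t) + u(t)ᵀ G u(t) ) dt ≤ x₀ᵀ X x₀ + Σⱼ τⱼ x₀ᵀ S₁ⱼ x₀ + Σᵢ x₀ᵀ S̃₂ᵢ x₀. -/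
open Matrix MeasureTheory

section helpers
variable {α β γ : Type*} [Fintype α] [Fintype β] [Fintype γ]

lemma dpt (A : Matrix α β ℝ) (v : β → ℝ) (w : α → ℝ) :
    (Aᵀ *ᵥ w) ⬝ᵥ v = w ⬝ᵥ (A *ᵥ v) := by
  rw [mulVec_transpose, dotProduct_mulVec]

lemma dpt' (A : Matrix α β ℝ) (v : α → ℝ) (w : β → ℝ) :
    (A *ᵥ w) ⬝ᵥ v = w ⬝ᵥ (Aᵀ *ᵥ v) := by
  simpa using dpt Aᵀ v w

lemma dpmm (A : Matrix α β ℝ) (B : Matrix α γ ℝ) (v : β → ℝ) (w : γ → ℝ) :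
    v ⬝ᵥ ((Aᵀ * B) *ᵥ w) = (A *ᵥ v) ⬝ᵥ (B *ᵥ w) := by
  rw [← mulVec_mulVec, dotProduct_comm, dpt, dotProduct_comm]

lemma dpsym (M : Matrix α α ℝ) (v : α → ℝ) : v ⬝ᵥ (Mᵀ *ᵥ v) = v ⬝ᵥ (M *ᵥ v) := by
  rw [← dpt' M v v, dotProduct_comm]

lemma sumsq (v : α → ℝ) : (∑ a, v a ^ 2) = v ⬝ᵥ v := by
  simp [dotProduct, sq]

lemma dp_self_nonneg (v : α → ℝ) : 0 ≤ v ⬝ᵥ v :=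
  Finset.sum_nonneg fun i _ => mul_self_nonneg _

lemma sum_mulVec'_s10 {ι : Type*} (s : Finset ι) (A : ι → Matrix α β ℝ) (v : β → ℝ) :
    (∑ i ∈ s, A i) *ᵥ v = ∑ i ∈ s, A i *ᵥ v := by
  ext a
  simp only [mulVec, dotProduct, Finset.sum_apply, Matrix.sum_apply, Finset.sum_mul]
  rw [Finset.sum_comm]

lemma dotProduct_sum' {ι : Type*} (s : Finset ι) (v : α → ℝ) (w : ι → α → ℝ) :
    v ⬝ᵥ (∑ i ∈ s, w i) = ∑ i ∈ s, v ⬝ᵥ w i := by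
  simp only [dotProduct, Finset.sum_apply, Finset.mul_sum]
  rw [Finset.sum_comm]

lemma sum_dotProduct' {ι : Type*} (s : Finset ι) (v : α → ℝ) (w : ι → α → ℝ) :
    (∑ i ∈ s, w i) ⬝ᵥ v = ∑ i ∈ s, w i ⬝ᵥ v := by
  rw [dotProduct_comm, dotProduct_sum']
  simp [dotProduct_comm]

lemma compsq {τ : ℝ} (hτ : 0 < τ) (a c : α → ℝ) :
    2 * (a ⬝ᵥ c) ≤ τ * (a ⬝ᵥ a) + τ⁻¹ * (c ⬝ᵥ c) := by
  have h0 : 0 ≤ (τ • a - c) ⬝ᵥ (τ • a - c) := dp_self_nonneg _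
  have hexp : (τ • a - c) ⬝ᵥ (τ • a - c)
      = τ^2 * (a ⬝ᵥ a) - 2 * τ * (a ⬝ᵥ c) + c ⬝ᵥ c := by
    simp only [sub_dotProduct, dotProduct_sub, smul_dotProduct, dotProduct_smul,
      dotProduct_comm c a, smul_eq_mul]
    ring
  rw [hexp] at h0
  have hτ' : τ ≠ 0 := ne_of_gt hτ
  have h2 : 0 ≤ τ⁻¹ * (τ^2 * (a ⬝ᵥ a) - 2 * τ * (a ⬝ᵥ c) + c ⬝ᵥ c) :=
    mul_nonneg (inv_nonneg.2 hτ.le) h0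
  have key : τ⁻¹ * (τ^2 * (a ⬝ᵥ a) - 2 * τ * (a ⬝ᵥ c) + c ⬝ᵥ c)
      = τ * (a ⬝ᵥ a) - 2 * (a ⬝ᵥ c) + τ⁻¹ * (c ⬝ᵥ c) := by
    field_simp
  rw [key] at h2
  linarith

lemma symm_of_posdef {M : Matrix α α ℝ} (h : M.PosDef) : Mᵀ = M := by
  have := h.isHermitian
  rwa [Matrix.IsHermitian, conjTranspose_eq_transpose_of_trivial] at this

lemma symm_of_psd {M : Matrix α α ℝ} (h : M.PosSemidef) : Mᵀ = M := by
  have := h.isHermitian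
  rwa [Matrix.IsHermitian, conjTranspose_eq_transpose_of_trivial] at this

lemma psd_nonneg {M : Matrix α α ℝ} (h : M.PosSemidef) (v : α → ℝ) :
    0 ≤ v ⬝ᵥ (M *ᵥ v) := by simpa using h.dotProduct_mulVec_nonneg v

lemma smul_psd [DecidableEq α] {M : Matrix α α ℝ} (h : M.PosSemidef) {c : ℝ} (hc : 0 ≤ c) :
    (c • M).PosSemidef := by
  constructor
  · have hM : Mᵀ = M := symm_of_psd h
    rw [Matrix.IsHermitian, conjTranspose_eq_transpose_of_trivial, transpose_smul, hM]
  · exact (h.smul hc).2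

lemma sum_psd {ι : Type*} (s : Finset ι) (A : ι → Matrix α α ℝ)
    (h : ∀ i ∈ s, (A i).PosSemidef) : (∑ i ∈ s, A i).PosSemidef := by
  classical
  induction s using Finset.induction_on with
  | empty => simpa using Matrix.PosSemidef.zero
  | @insert a s' hx ih =>
    rw [Finset.sum_insert hx]
    exact (h a (Finset.mem_insert_self a s')).add
      (ih fun i hi => h i (Finset.mem_insert_of_mem hi))

lemma contOn_dp {f g : ℝ → α → ℝ} {s : Set ℝ} (hf : ContinuousOn f s)
    (hg : ContinuousOn g s) : ContinuousOn (fun t => f t ⬝ᵥ g t) s := by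
  simp only [dotProduct]
  apply continuousOn_finset_sum
  intro i _
  exact ((continuous_apply i).comp_continuousOn hf).mul
    ((continuous_apply i).comp_continuousOn hg)

lemma contOn_mulVec_s10 (A : Matrix α β ℝ) {f : ℝ → β → ℝ} {s : Set ℝ}
    (hf : ContinuousOn f s) : ContinuousOn (fun t => A *ᵥ f t) s := by
  rw [continuousOn_pi]
  intro a
  simp only [mulVec, dotProduct]
  apply continuousOn_finset_sum
  intro i _
  exact continuousOn_const.mul ((continuous_apply i).comp_continuousOn hf)
end helpers

section helpers2
variable {α β γ : Type*} [Fintype α] [Fintype β] [Fintype γ]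
lemma dpAAT (A : Matrix α β ℝ) (v w : α → ℝ) :
    v ⬝ᵥ ((A * Aᵀ) *ᵥ w) = (Aᵀ *ᵥ v) ⬝ᵥ (Aᵀ *ᵥ w) := by
  rw [show A * Aᵀ = Aᵀᵀ * Aᵀ by rw [transpose_transpose], dpmm]
end helpers2

section matrixlemmas
variable {α β : Type*} [Fintype α] [Fintype β] [DecidableEq α] [DecidableEq β]

lemma pd_det_isUnit {M : Matrix α α ℝ} (h : M.PosDef) : IsUnit M.det :=
  isUnit_iff_ne_zero.2 h.det_pos.ne'

lemma invsq {P Φ : Matrix α α ℝ} (h2 : P * P = Φ) : P⁻¹ * P⁻¹ = Φ⁻¹ := by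
  rw [← h2, Matrix.mul_inv_rev]

lemma phibar_inv (D : Matrix α β ℝ) (hΦ : (1 - Dᵀ * D).PosDef) :
    (1 - D * Dᵀ)⁻¹ = 1 + D * (1 - Dᵀ * D)⁻¹ * Dᵀ := by
  apply Matrix.inv_eq_right_inv
  have h1 : (1 - Dᵀ * D) * (1 - Dᵀ * D)⁻¹ = 1 := Matrix.mul_nonsing_inv _ (pd_det_isUnit hΦ)
  have comm : (1 - D * Dᵀ) * D = D * (1 - Dᵀ * D) := by
    rw [Matrix.sub_mul, Matrix.mul_sub, Matrix.one_mul, Matrix.mul_one, Matrix.mul_assoc]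
  calc (1 - D * Dᵀ) * (1 + D * (1 - Dᵀ * D)⁻¹ * Dᵀ)
      = (1 - D * Dᵀ) + ((1 - D * Dᵀ) * D) * ((1 - Dᵀ * D)⁻¹ * Dᵀ) := by
        rw [Matrix.mul_add, Matrix.mul_one, Matrix.mul_assoc D _ Dᵀ,
          ← Matrix.mul_assoc (1 - D * Dᵀ) D _]
    _ = (1 - D * Dᵀ) + D * ((1 - Dᵀ * D) * ((1 - Dᵀ * D)⁻¹ * Dᵀ)) := by
        rw [comm, Matrix.mul_assoc]
    _ = (1 - D * Dᵀ) + D * Dᵀ := by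
        rw [← Matrix.mul_assoc (1 - Dᵀ * D) _ Dᵀ, h1, Matrix.one_mul]
    _ = 1 := sub_add_cancel _ _

lemma loopshiftA (D : Matrix α β ℝ) (P : Matrix β β ℝ) (Q : Matrix α α ℝ)
    (hΦ : (1 - Dᵀ * D).PosDef) (hP : P.PosDef) (hP2 : P * P = 1 - Dᵀ * D)
    (hQ : Q.PosDef) (hQ2 : Q * Q = 1 - D * Dᵀ) (v : α → ℝ) (w : β → ℝ) :
    (P *ᵥ w - P⁻¹ *ᵥ (Dᵀ *ᵥ v)) ⬝ᵥ (P *ᵥ w - P⁻¹ *ᵥ (Dᵀ *ᵥ v))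
      - (Q⁻¹ *ᵥ v) ⬝ᵥ (Q⁻¹ *ᵥ v)
    = w ⬝ᵥ w - (v + D *ᵥ w) ⬝ᵥ (v + D *ᵥ w) := by
  have hPs : Pᵀ = P := symm_of_posdef hP
  have hQs : Qᵀ = Q := symm_of_posdef hQ
  have hPdet : IsUnit P.det := pd_det_isUnit hP
  have hPinv : P * P⁻¹ = 1 := Matrix.mul_nonsing_inv _ hPdet
  have hPis : P⁻¹ᵀ = P⁻¹ := by rw [Matrix.transpose_nonsing_inv, hPs]
  have hQis : Q⁻¹ᵀ = Q⁻¹ := by rw [Matrix.transpose_nonsing_inv, hQs]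
  have hPinv2 : P⁻¹ * P⁻¹ = (1 - Dᵀ * D)⁻¹ := invsq hP2
  have hQinv2 : Q⁻¹ * Q⁻¹ = (1 - D * Dᵀ)⁻¹ := invsq hQ2
  have t1 : (P *ᵥ w) ⬝ᵥ (P *ᵥ w) = w ⬝ᵥ w - w ⬝ᵥ ((Dᵀ * D) *ᵥ w) := by
    rw [← dpmm P P w w, hPs, hP2, Matrix.sub_mulVec, Matrix.one_mulVec, dotProduct_sub]
  have t2 : (P *ᵥ w) ⬝ᵥ (P⁻¹ *ᵥ (Dᵀ *ᵥ v)) = w ⬝ᵥ (Dᵀ *ᵥ v) := by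
    rw [← dpmm P P⁻¹ w (Dᵀ *ᵥ v), hPs, hPinv, Matrix.one_mulVec]
  have t2' : (P⁻¹ *ᵥ (Dᵀ *ᵥ v)) ⬝ᵥ (P *ᵥ w) = w ⬝ᵥ (Dᵀ *ᵥ v) := by
    rw [dotProduct_comm, t2]
  have t3 : (P⁻¹ *ᵥ (Dᵀ *ᵥ v)) ⬝ᵥ (P⁻¹ *ᵥ (Dᵀ *ᵥ v))
      = (Dᵀ *ᵥ v) ⬝ᵥ ((1 - Dᵀ * D)⁻¹ *ᵥ (Dᵀ *ᵥ v)) := by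
    rw [← dpmm P⁻¹ P⁻¹ (Dᵀ *ᵥ v) (Dᵀ *ᵥ v), hPis, hPinv2]
  have t4 : (Q⁻¹ *ᵥ v) ⬝ᵥ (Q⁻¹ *ᵥ v)
      = v ⬝ᵥ v + (Dᵀ *ᵥ v) ⬝ᵥ ((1 - Dᵀ * D)⁻¹ *ᵥ (Dᵀ *ᵥ v)) := by
    rw [← dpmm Q⁻¹ Q⁻¹ v v, hQis, hQinv2, phibar_inv D hΦ, Matrix.add_mulVec,
      Matrix.one_mulVec, dotProduct_add]
    congr 1
    have assoc : D * (1 - Dᵀ * D)⁻¹ * Dᵀ = Dᵀᵀ * ((1 - Dᵀ * D)⁻¹ * Dᵀ) := by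
      rw [transpose_transpose, Matrix.mul_assoc]
    rw [assoc, dpmm, Matrix.mulVec_mulVec]
  have t5 : (D *ᵥ w) ⬝ᵥ (D *ᵥ w) = w ⬝ᵥ ((Dᵀ * D) *ᵥ w) := by
    rw [← dpmm D D w w]
  have t6 : v ⬝ᵥ (D *ᵥ w) = w ⬝ᵥ (Dᵀ *ᵥ v) := by
    rw [dotProduct_comm, dpt']
  have t6' : (D *ᵥ w) ⬝ᵥ v = w ⬝ᵥ (Dᵀ *ᵥ v) := by rw [dpt']
  simp only [sub_dotProduct, dotProduct_sub, add_dotProduct, dotProduct_add,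
    t1, t2, t2', t3, t4, t5, t6, t6']
  ring

lemma loopshiftB {γ : Type*} [Fintype γ] (D : Matrix α β ℝ) (P : Matrix β β ℝ)
    (hP : P.PosDef) (hP2 : P * P = 1 - Dᵀ * D)
    (B : Matrix γ β ℝ) (v : α → ℝ) (w : β → ℝ) :
    (B * P⁻¹) *ᵥ (P *ᵥ w - P⁻¹ *ᵥ (Dᵀ *ᵥ v))
      = B *ᵥ w - (B * (1 - Dᵀ * D)⁻¹ * Dᵀ) *ᵥ v := by
  have hPdet : IsUnit P.det := pd_det_isUnit hP
  have h1 : P⁻¹ * P = 1 := Matrix.nonsing_inv_mul _ hPdet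
  rw [Matrix.mulVec_sub, Matrix.mulVec_mulVec, Matrix.mulVec_mulVec,
    Matrix.mul_assoc B P⁻¹ P, h1, Matrix.mul_one]
  congr 1
  rw [Matrix.mulVec_mulVec, Matrix.mul_assoc B P⁻¹ P⁻¹, invsq hP2]

lemma bracket {n' m' : ℕ} (Acheck Qτ Wτ X : Matrix (Fin n') (Fin n') ℝ)
    (B₂check Lτ : Matrix (Fin n') (Fin m') ℝ)
    (Gτ : Matrix (Fin m') (Fin m') ℝ) (K : Matrix (Fin m') (Fin n') ℝ)
    (hXs : Xᵀ = X) (hGs : Gτᵀ = Gτ) (hGdet : IsUnit Gτ.det)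
    (hRic : (Acheck - B₂check * Gτ⁻¹ * Lτᵀ)ᵀ * X + X * (Acheck - B₂check * Gτ⁻¹ * Lτᵀ) +
      X * (Wτ - B₂check * Gτ⁻¹ * B₂checkᵀ) * X + Qτ - Lτ * Gτ⁻¹ * Lτᵀ = 0)
    (hK : K = -(Gτ⁻¹ * (B₂checkᵀ * X + Lτᵀ))) :
    Qτ + Lτ * K + Kᵀ * Lτᵀ + Kᵀ * Gτ * K + Acheckᵀ * X + X * Acheck +
      Kᵀ * B₂checkᵀ * X + X * B₂check * K + X * Wτ * X = 0 := by
  have hGi : Gτ⁻¹ᵀ = Gτ⁻¹ := by rw [Matrix.transpose_nonsing_inv, hGs]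
  have hGG : Gτ * Gτ⁻¹ = 1 := Matrix.mul_nonsing_inv _ hGdet
  have hKT : Kᵀ = -((X * B₂check + Lτ) * Gτ⁻¹) := by
    rw [hK]
    simp only [transpose_neg, transpose_mul, transpose_add, transpose_transpose, hXs, hGi]
  have hGK : Gτ * K = -(B₂checkᵀ * X + Lτᵀ) := by
    rw [hK, Matrix.mul_neg, ← Matrix.mul_assoc, hGG, Matrix.one_mul]
  have hKGK : Kᵀ * Gτ * K = (X * B₂check + Lτ) * Gτ⁻¹ * (B₂checkᵀ * X + Lτᵀ) := by
    rw [Matrix.mul_assoc, hGK, hKT, Matrix.neg_mul, Matrix.mul_neg, neg_neg,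
      Matrix.mul_assoc]
  have hRic' := hRic
  rw [transpose_sub, transpose_mul, transpose_mul, transpose_transpose, hGi] at hRic'
  rw [hKGK, hKT, hK, ← hRic']
  simp only [Matrix.mul_add, Matrix.add_mul, Matrix.mul_sub, Matrix.sub_mul, Matrix.mul_neg,
    Matrix.neg_mul, Matrix.mul_one, Matrix.one_mul, Matrix.mul_assoc]
  abel
end matrixlemmas

lemma core {n m k g : ℕ} {p q : Fin k → ℕ} {r s : Fin g → ℕ}
    (Acheck : Matrix (Fin n) (Fin n) ℝ)
    (B₁ : ∀ j : Fin k, Matrix (Fin n) (Fin (p j)) ℝ)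
    (C₁ : ∀ j : Fin k, Matrix (Fin (q j)) (Fin n) ℝ)
    (D₁ : ∀ j : Fin k, Matrix (Fin (q j)) (Fin m) ℝ)
    (B₂check' : ∀ i : Fin g, Matrix (Fin n) (Fin (r i)) ℝ)
    (C₂check : ∀ i : Fin g, Matrix (Fin (s i)) (Fin n) ℝ)
    (D₂check : ∀ i : Fin g, Matrix (Fin (s i)) (Fin m) ℝ)
    (B₂check : Matrix (Fin n) (Fin m) ℝ)
    (R : Matrix (Fin n) (Fin n) ℝ) (G : Matrix (Fin m) (Fin m) ℝ)
    (X : Matrix (Fin n) (Fin n) ℝ) (K : Matrix (Fin m) (Fin n) ℝ)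
    (τ : Fin k → ℝ) (hτ : ∀ j, 0 < τ j)
    (Gτ : Matrix (Fin m) (Fin m) ℝ)
    (hGτ : Gτ = G + (∑ j, τ j • ((D₁ j)ᵀ * D₁ j)) + ∑ i, (D₂check i)ᵀ * D₂check i)
    (Qτ : Matrix (Fin n) (Fin n) ℝ)
    (hQτ : Qτ = R + (∑ j, τ j • ((C₁ j)ᵀ * C₁ j)) + ∑ i, (C₂check i)ᵀ * C₂check i)
    (Lτ : Matrix (Fin n) (Fin m) ℝ)
    (hLτ : Lτ = (∑ j, τ j • ((C₁ j)ᵀ * D₁ j)) + ∑ i, (C₂check i)ᵀ * D₂check i)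
    (Wτ : Matrix (Fin n) (Fin n) ℝ)
    (hWτ : Wτ = (∑ j, (τ j)⁻¹ • (B₁ j * (B₁ j)ᵀ)) + ∑ i, B₂check' i * (B₂check' i)ᵀ)
    (hXs : Xᵀ = X)
    (hBracket : Qτ + Lτ * K + Kᵀ * Lτᵀ + Kᵀ * Gτ * K + Acheckᵀ * X + X * Acheck +
      Kᵀ * B₂checkᵀ * X + X * B₂check * K + X * Wτ * X = 0)
    (xv : Fin n → ℝ) (a : ∀ j : Fin k, Fin (p j) → ℝ) (b : ∀ i : Fin g, Fin (r i) → ℝ)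
    (uv : Fin m → ℝ) (huv : uv = K *ᵥ xv)
    (xd : Fin n → ℝ)
    (hxd : xd = Acheck *ᵥ xv + (∑ j, B₁ j *ᵥ a j) + (∑ i, B₂check' i *ᵥ b i) +
      B₂check *ᵥ uv) :
    xv ⬝ᵥ (R *ᵥ xv) + uv ⬝ᵥ (G *ᵥ uv) + (xd ⬝ᵥ (X *ᵥ xv) + xv ⬝ᵥ (X *ᵥ xd))
      ≤ (∑ j, τ j * (a j ⬝ᵥ a j -
          (C₁ j *ᵥ xv + D₁ j *ᵥ uv) ⬝ᵥ (C₁ j *ᵥ xv + D₁ j *ᵥ uv)))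
        + ∑ i, (b i ⬝ᵥ b i -
          (C₂check i *ᵥ xv + D₂check i *ᵥ uv) ⬝ᵥ (C₂check i *ᵥ xv + D₂check i *ᵥ uv)) := by
  have eQ : xv ⬝ᵥ (Qτ *ᵥ xv) = xv ⬝ᵥ (R *ᵥ xv)
      + (∑ j, τ j * ((C₁ j *ᵥ xv) ⬝ᵥ (C₁ j *ᵥ xv)))
      + ∑ i, (C₂check i *ᵥ xv) ⬝ᵥ (C₂check i *ᵥ xv) := by
    rw [hQτ]
    simp only [Matrix.add_mulVec, sum_mulVec'_s10, dotProduct_add, dotProduct_sum',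
      Matrix.smul_mulVec, dotProduct_smul, smul_eq_mul, dpmm]
  have e1 : xv ⬝ᵥ ((Lτ * K) *ᵥ xv)
      = (∑ j, τ j * ((C₁ j *ᵥ xv) ⬝ᵥ (D₁ j *ᵥ uv)))
        + ∑ i, (C₂check i *ᵥ xv) ⬝ᵥ (D₂check i *ᵥ uv) := by
    rw [← Matrix.mulVec_mulVec, ← huv, hLτ]
    simp only [Matrix.add_mulVec, sum_mulVec'_s10, dotProduct_add, dotProduct_sum',
      Matrix.smul_mulVec, dotProduct_smul, smul_eq_mul, dpmm]
  have e2 : xv ⬝ᵥ ((Kᵀ * Lτᵀ) *ᵥ xv)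
      = (∑ j, τ j * ((C₁ j *ᵥ xv) ⬝ᵥ (D₁ j *ᵥ uv)))
        + ∑ i, (C₂check i *ᵥ xv) ⬝ᵥ (D₂check i *ᵥ uv) := by
    rw [show Kᵀ * Lτᵀ = (Lτ * K)ᵀ from (transpose_mul _ _).symm, dpsym, e1]
  have e3 : xv ⬝ᵥ ((Kᵀ * Gτ * K) *ᵥ xv)
      = uv ⬝ᵥ (G *ᵥ uv) + (∑ j, τ j * ((D₁ j *ᵥ uv) ⬝ᵥ (D₁ j *ᵥ uv)))
        + ∑ i, (D₂check i *ᵥ uv) ⬝ᵥ (D₂check i *ᵥ uv) := by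
    rw [Matrix.mul_assoc, dpmm, ← Matrix.mulVec_mulVec, ← huv, hGτ]
    simp only [Matrix.add_mulVec, sum_mulVec'_s10, dotProduct_add, dotProduct_sum',
      Matrix.smul_mulVec, dotProduct_smul, smul_eq_mul, dpmm]
  have e4 : xv ⬝ᵥ ((Acheckᵀ * X) *ᵥ xv) = (Acheck *ᵥ xv) ⬝ᵥ (X *ᵥ xv) := dpmm _ _ _ _
  have e5 : xv ⬝ᵥ ((X * Acheck) *ᵥ xv) = (Acheck *ᵥ xv) ⬝ᵥ (X *ᵥ xv) := by
    rw [show X * Acheck = Xᵀ * Acheck by rw [hXs], dpmm, dotProduct_comm]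
  have e6 : xv ⬝ᵥ ((Kᵀ * B₂checkᵀ * X) *ᵥ xv) = (B₂check *ᵥ uv) ⬝ᵥ (X *ᵥ xv) := by
    rw [Matrix.mul_assoc, dpmm, ← huv, dpmm]
  have e7 : xv ⬝ᵥ ((X * B₂check * K) *ᵥ xv) = (B₂check *ᵥ uv) ⬝ᵥ (X *ᵥ xv) := by
    rw [show X * B₂check * K = Xᵀ * (B₂check * K) by rw [hXs, Matrix.mul_assoc], dpmm,
      ← Matrix.mulVec_mulVec, ← huv, dotProduct_comm]
  have e8 : xv ⬝ᵥ ((X * Wτ * X) *ᵥ xv)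
      = (∑ j, (τ j)⁻¹ * (((B₁ j)ᵀ *ᵥ (X *ᵥ xv)) ⬝ᵥ ((B₁ j)ᵀ *ᵥ (X *ᵥ xv))))
        + ∑ i, ((B₂check' i)ᵀ *ᵥ (X *ᵥ xv)) ⬝ᵥ ((B₂check' i)ᵀ *ᵥ (X *ᵥ xv)) := by
    rw [show X * Wτ * X = Xᵀ * (Wτ * X) by rw [hXs, Matrix.mul_assoc], dpmm,
      ← Matrix.mulVec_mulVec, hWτ]
    simp only [Matrix.add_mulVec, sum_mulVec'_s10, dotProduct_add, dotProduct_sum',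
      Matrix.smul_mulVec, dotProduct_smul, smul_eq_mul, dpAAT]
  have hzero : xv ⬝ᵥ ((Qτ + Lτ * K + Kᵀ * Lτᵀ + Kᵀ * Gτ * K + Acheckᵀ * X + X * Acheck +
      Kᵀ * B₂checkᵀ * X + X * B₂check * K + X * Wτ * X) *ᵥ xv) = 0 := by
    rw [hBracket, Matrix.zero_mulVec, dotProduct_zero]
  simp only [Matrix.add_mulVec, dotProduct_add] at hzero
  rw [eQ, e1, e2, e3, e4, e5, e6, e7, e8] at hzero
  -- left side expansion
  have hXxd : xv ⬝ᵥ (X *ᵥ xd) = xd ⬝ᵥ (X *ᵥ xv) := by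
    rw [dotProduct_comm, dpt', hXs]
  have s1 : ∀ j : Fin k, (B₁ j *ᵥ a j) ⬝ᵥ (X *ᵥ xv)
      = a j ⬝ᵥ ((B₁ j)ᵀ *ᵥ (X *ᵥ xv)) := fun j => dpt' _ _ _
  have s2 : ∀ i : Fin g, (B₂check' i *ᵥ b i) ⬝ᵥ (X *ᵥ xv)
      = b i ⬝ᵥ ((B₂check' i)ᵀ *ᵥ (X *ᵥ xv)) := fun i => dpt' _ _ _
  have hxdy : xd ⬝ᵥ (X *ᵥ xv) = (Acheck *ᵥ xv) ⬝ᵥ (X *ᵥ xv)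
      + (∑ j, a j ⬝ᵥ ((B₁ j)ᵀ *ᵥ (X *ᵥ xv)))
      + (∑ i, b i ⬝ᵥ ((B₂check' i)ᵀ *ᵥ (X *ᵥ xv)))
      + (B₂check *ᵥ uv) ⬝ᵥ (X *ᵥ xv) := by
    rw [hxd]
    simp only [add_dotProduct, sum_dotProduct', s1, s2]
  -- right side expansion
  have rj : ∀ j : Fin k, τ j * (a j ⬝ᵥ a j -
      (C₁ j *ᵥ xv + D₁ j *ᵥ uv) ⬝ᵥ (C₁ j *ᵥ xv + D₁ j *ᵥ uv))
      = τ j * (a j ⬝ᵥ a j) - τ j * ((C₁ j *ᵥ xv) ⬝ᵥ (C₁ j *ᵥ xv))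
        - 2 * (τ j * ((C₁ j *ᵥ xv) ⬝ᵥ (D₁ j *ᵥ uv)))
        - τ j * ((D₁ j *ᵥ uv) ⬝ᵥ (D₁ j *ᵥ uv)) := by
    intro j
    rw [dotProduct_add, add_dotProduct, add_dotProduct,
      dotProduct_comm (D₁ j *ᵥ uv) (C₁ j *ᵥ xv)]
    ring
  have ri : ∀ i : Fin g, (b i ⬝ᵥ b i -
      (C₂check i *ᵥ xv + D₂check i *ᵥ uv) ⬝ᵥ (C₂check i *ᵥ xv + D₂check i *ᵥ uv))
      = b i ⬝ᵥ b i - (C₂check i *ᵥ xv) ⬝ᵥ (C₂check i *ᵥ xv)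
        - 2 * ((C₂check i *ᵥ xv) ⬝ᵥ (D₂check i *ᵥ uv))
        - (D₂check i *ᵥ uv) ⬝ᵥ (D₂check i *ᵥ uv) := by
    intro i
    rw [dotProduct_add, add_dotProduct, add_dotProduct,
      dotProduct_comm (D₂check i *ᵥ uv) (C₂check i *ᵥ xv)]
    ring
  -- completion of squares
  have S1 : 2 * (∑ j, a j ⬝ᵥ ((B₁ j)ᵀ *ᵥ (X *ᵥ xv)))
      ≤ (∑ j, τ j * (a j ⬝ᵥ a j))
        + ∑ j, (τ j)⁻¹ * (((B₁ j)ᵀ *ᵥ (X *ᵥ xv)) ⬝ᵥ ((B₁ j)ᵀ *ᵥ (X *ᵥ xv))) := by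
    rw [Finset.mul_sum, ← Finset.sum_add_distrib]
    exact Finset.sum_le_sum fun j _ => compsq (hτ j) _ _
  have S2 : 2 * (∑ i, b i ⬝ᵥ ((B₂check' i)ᵀ *ᵥ (X *ᵥ xv)))
      ≤ (∑ i, b i ⬝ᵥ b i)
        + ∑ i, ((B₂check' i)ᵀ *ᵥ (X *ᵥ xv)) ⬝ᵥ ((B₂check' i)ᵀ *ᵥ (X *ᵥ xv)) := by
    rw [Finset.mul_sum, ← Finset.sum_add_distrib]
    refine Finset.sum_le_sum fun i _ => ?_
    have := compsq one_pos (b i) ((B₂check' i)ᵀ *ᵥ (X *ᵥ xv))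
    simpa using this
  rw [hXxd, hxdy]
  simp only [rj, ri, Finset.sum_sub_distrib, ← Finset.mul_sum]
  linarith [hzero, S1, S2]

/-- Part (ii) of the paper's main theorem: the guaranteed cost bound persists
for the uncertain system *before* loop shifting.  The system has direct feedthrough `D̄₁₁ᵢ` in
the nonlinearity channels (with `D̄₁₁ᵢᵀD̄₁₁ᵢ < I`), the signals satisfy the normalized IQCs,
`X ⪰ 0` solves the Riccati equation for the loop-shifted data, and the control is `u = Kx`
with the corresponding minimax LQR gain.  Then for every `T₀ ≥ 0`,
`∫₀^{T₀}(xᵀRx + uᵀGu) dt ≤ x₀ᵀXx₀ + Σⱼ τⱼ x₀ᵀS₁ⱼx₀ + Σᵢ x₀ᵀS̃₂ᵢx₀`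
(Euclidean norms written as sums of squares; `Φᵢ^{1/2}`, `Φ̄ᵢ^{1/2}` are the positive
definite square roots `P i`, `Q i`). -/
theorem stmt10 (n m k g : ℕ) (p q : Fin k → ℕ) (r s : Fin g → ℕ)
    (Abar : Matrix (Fin n) (Fin n) ℝ) (B₂bar : Matrix (Fin n) (Fin m) ℝ)
    (B₁ : ∀ j : Fin k, Matrix (Fin n) (Fin (p j)) ℝ)
    (C₁ : ∀ j : Fin k, Matrix (Fin (q j)) (Fin n) ℝ)
    (D₁ : ∀ j : Fin k, Matrix (Fin (q j)) (Fin m) ℝ)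
    (B₂bar' : ∀ i : Fin g, Matrix (Fin n) (Fin (r i)) ℝ)
    (C₂bar : ∀ i : Fin g, Matrix (Fin (s i)) (Fin n) ℝ)
    (D₂bar : ∀ i : Fin g, Matrix (Fin (s i)) (Fin m) ℝ)
    (D₁₁ : ∀ i : Fin g, Matrix (Fin (s i)) (Fin (r i)) ℝ)
    (hD₁₁ : ∀ i, (1 - (D₁₁ i)ᵀ * D₁₁ i).PosDef)
    -- positive definite square roots of Φᵢ = I - D₁₁ᵢᵀD₁₁ᵢ and Φ̄ᵢ = I - D₁₁ᵢD₁₁ᵢᵀ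
    (P : ∀ i : Fin g, Matrix (Fin (r i)) (Fin (r i)) ℝ)
    (hP : ∀ i, (P i).PosDef) (hP2 : ∀ i, P i * P i = 1 - (D₁₁ i)ᵀ * D₁₁ i)
    (Q : ∀ i : Fin g, Matrix (Fin (s i)) (Fin (s i)) ℝ)
    (hQ : ∀ i, (Q i).PosDef) (hQ2 : ∀ i, Q i * Q i = 1 - D₁₁ i * (D₁₁ i)ᵀ)
    -- loop-shifted data
    (Acheck : Matrix (Fin n) (Fin n) ℝ)
    (hAcheck : Acheck = Abar +
      ∑ i, B₂bar' i * (1 - (D₁₁ i)ᵀ * D₁₁ i)⁻¹ * (D₁₁ i)ᵀ * C₂bar i)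
    (B₂check' : ∀ i : Fin g, Matrix (Fin n) (Fin (r i)) ℝ)
    (hB₂check' : ∀ i, B₂check' i = B₂bar' i * (P i)⁻¹)
    (B₂check : Matrix (Fin n) (Fin m) ℝ)
    (hB₂check : B₂check = B₂bar +
      ∑ i, B₂bar' i * (1 - (D₁₁ i)ᵀ * D₁₁ i)⁻¹ * (D₁₁ i)ᵀ * D₂bar i)
    (C₂check : ∀ i : Fin g, Matrix (Fin (s i)) (Fin n) ℝ)
    (hC₂check : ∀ i, C₂check i = (Q i)⁻¹ * C₂bar i)
    (D₂check : ∀ i : Fin g, Matrix (Fin (s i)) (Fin m) ℝ)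
    (hD₂check : ∀ i, D₂check i = (Q i)⁻¹ * D₂bar i)
    -- cost weights and multipliers
    (R : Matrix (Fin n) (Fin n) ℝ) (hR : R.PosDef)
    (G : Matrix (Fin m) (Fin m) ℝ) (hG : G.PosDef)
    (τ : Fin k → ℝ) (hτ : ∀ j, 0 < τ j)
    -- Riccati data for the loop-shifted system
    (Gτ : Matrix (Fin m) (Fin m) ℝ)
    (hGτ : Gτ = G + (∑ j, τ j • ((D₁ j)ᵀ * D₁ j)) + ∑ i, (D₂check i)ᵀ * D₂check i)
    (Qτ : Matrix (Fin n) (Fin n) ℝ)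
    (hQτ : Qτ = R + (∑ j, τ j • ((C₁ j)ᵀ * C₁ j)) + ∑ i, (C₂check i)ᵀ * C₂check i)
    (Lτ : Matrix (Fin n) (Fin m) ℝ)
    (hLτ : Lτ = (∑ j, τ j • ((C₁ j)ᵀ * D₁ j)) + ∑ i, (C₂check i)ᵀ * D₂check i)
    (Wτ : Matrix (Fin n) (Fin n) ℝ)
    (hWτ : Wτ = (∑ j, (τ j)⁻¹ • (B₁ j * (B₁ j)ᵀ)) + ∑ i, B₂check' i * (B₂check' i)ᵀ)
    (X : Matrix (Fin n) (Fin n) ℝ) (hXsymm : X.IsSymm) (hXpsd : X.PosSemidef)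
    (hRic : (Acheck - B₂check * Gτ⁻¹ * Lτᵀ)ᵀ * X + X * (Acheck - B₂check * Gτ⁻¹ * Lτᵀ) +
      X * (Wτ - B₂check * Gτ⁻¹ * B₂checkᵀ) * X + Qτ - Lτ * Gτ⁻¹ * Lτᵀ = 0)
    (K : Matrix (Fin m) (Fin n) ℝ) (hK : K = -(Gτ⁻¹ * (B₂checkᵀ * X + Lτᵀ)))
    -- closed-loop trajectory of the system before loop shifting
    (x : ℝ → Fin n → ℝ) (ξ : ∀ j : Fin k, ℝ → Fin (p j) → ℝ)
    (ξbar : ∀ i : Fin g, ℝ → Fin (r i) → ℝ)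
    (u : ℝ → Fin m → ℝ) (hu : ∀ t, u t = K *ᵥ x t)
    (x₀ : Fin n → ℝ) (hx0 : x 0 = x₀)
    (hdyn : ∀ t, 0 ≤ t → HasDerivAt x
      (Abar *ᵥ x t + (∑ j, B₁ j *ᵥ ξ j t) + (∑ i, B₂bar' i *ᵥ ξbar i t) + B₂bar *ᵥ u t) t)
    (hξc : ∀ j, ContinuousOn (ξ j) (Set.Ici (0:ℝ)))
    (hξbarc : ∀ i, ContinuousOn (ξbar i) (Set.Ici (0:ℝ)))
    -- integral quadratic constraints (ζⱼ = C₁ⱼx + D₁ⱼu, ζ̄ᵢ = C̄₂ᵢx + D̄₂ᵢu + D̄₁₁ᵢξ̄ᵢ)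
    (S₁ : ∀ _ : Fin k, Matrix (Fin n) (Fin n) ℝ) (hS₁ : ∀ j, (S₁ j).PosDef)
    (S₂ : ∀ _ : Fin g, Matrix (Fin n) (Fin n) ℝ) (hS₂ : ∀ i, (S₂ i).PosDef)
    (hIQC1 : ∀ T₀, 0 ≤ T₀ → ∀ j,
      (∫ t in (0:ℝ)..T₀,
        ((∑ a, ξ j t a ^ 2) - ∑ a, ((C₁ j *ᵥ x t + D₁ j *ᵥ u t) a) ^ 2)) ≤
          x₀ ⬝ᵥ (S₁ j *ᵥ x₀))
    (hIQC2 : ∀ T₀, 0 ≤ T₀ → ∀ i,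
      (∫ t in (0:ℝ)..T₀,
        ((∑ a, ξbar i t a ^ 2) -
          ∑ a, ((C₂bar i *ᵥ x t + D₂bar i *ᵥ u t + D₁₁ i *ᵥ ξbar i t) a) ^ 2)) ≤
            x₀ ⬝ᵥ (S₂ i *ᵥ x₀)) :
    -- guaranteed cost bound
    ∀ T₀, 0 ≤ T₀ →
      (∫ t in (0:ℝ)..T₀, (x t ⬝ᵥ (R *ᵥ x t) + u t ⬝ᵥ (G *ᵥ u t))) ≤
        x₀ ⬝ᵥ (X *ᵥ x₀) + (∑ j, τ j * (x₀ ⬝ᵥ (S₁ j *ᵥ x₀))) +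
          ∑ i, x₀ ⬝ᵥ (S₂ i *ᵥ x₀) := by
  intro T₀ hT₀
  classical
  have hXs : Xᵀ = X := hXsymm
  have psd1 : (∑ j, τ j • ((D₁ j)ᵀ * D₁ j)).PosSemidef := by
    refine sum_psd _ _ fun j _ => smul_psd ?_ (le_of_lt (hτ j))
    have := Matrix.posSemidef_conjTranspose_mul_self (D₁ j)
    rwa [conjTranspose_eq_transpose_of_trivial] at this
  have psd2 : (∑ i, (D₂check i)ᵀ * D₂check i).PosSemidef := by
    refine sum_psd _ _ fun i _ => ?_
    have := Matrix.posSemidef_conjTranspose_mul_self (D₂check i)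
    rwa [conjTranspose_eq_transpose_of_trivial] at this
  have hGτpd : Gτ.PosDef := by
    rw [hGτ]
    exact (hG.add_posSemidef psd1).add_posSemidef psd2
  have hGs : Gτᵀ = Gτ := symm_of_posdef hGτpd
  have hBracket := bracket Acheck Qτ Wτ X B₂check Lτ Gτ K hXs hGs
    (pd_det_isUnit hGτpd) hRic hK
  -- continuity of the trajectory and control
  have hxc : ContinuousOn x (Set.Ici 0) :=
    fun t ht => ((hdyn t ht).continuousAt).continuousWithinAt
  have huc : ContinuousOn u (Set.Ici 0) :=
    (contOn_mulVec_s10 K hxc).congr fun t _ => hu t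
  set xd : ℝ → Fin n → ℝ := fun t =>
    Abar *ᵥ x t + (∑ j, B₁ j *ᵥ ξ j t) + (∑ i, B₂bar' i *ᵥ ξbar i t) + B₂bar *ᵥ u t
    with hxddef
  have hxdc : ContinuousOn xd (Set.Ici 0) :=
    (((contOn_mulVec_s10 _ hxc).add
      (continuousOn_finset_sum _ fun j _ => contOn_mulVec_s10 _ (hξc j))).add
      (continuousOn_finset_sum _ fun i _ => contOn_mulVec_s10 _ (hξbarc i))).add
      (contOn_mulVec_s10 _ huc)
  have hsub : Set.uIcc (0:ℝ) T₀ ⊆ Set.Ici 0 := by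
    rw [Set.uIcc_of_le hT₀]
    exact fun t ht => ht.1
  set F : ℝ → ℝ := fun t => x t ⬝ᵥ (X *ᵥ x t) with hFdef
  set Fd : ℝ → ℝ := fun t => xd t ⬝ᵥ (X *ᵥ x t) + x t ⬝ᵥ (X *ᵥ xd t) with hFddef
  have hF : ∀ t ∈ Set.uIcc (0:ℝ) T₀, HasDerivAt F (Fd t) t := by
    intro t ht
    have ht0 : (0:ℝ) ≤ t := hsub ht
    have hd : HasDerivAt x (xd t) t := hdyn t ht0
    have hcoord : ∀ a, HasDerivAt (fun t => x t a) (xd t a) t :=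
      fun a => (hasDerivAt_pi.mp hd) a
    have hinner : ∀ a : Fin n,
        HasDerivAt (fun t => ∑ b, X a b * x t b) (∑ b, X a b * xd t b) t :=
      fun a => HasDerivAt.fun_sum (fun b _ => (hcoord b).const_mul (X a b))
    have hprod : HasDerivAt (fun t => ∑ a, x t a * ∑ b, X a b * x t b)
        (∑ a, (xd t a * (∑ b, X a b * x t b) + x t a * ∑ b, X a b * xd t b)) t :=
      HasDerivAt.fun_sum (fun a _ => (hcoord a).mul (hinner a))
    have funeq : F = fun t => ∑ a, x t a * ∑ b, X a b * x t b := by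
      funext t'
      simp [hFdef, dotProduct, Matrix.mulVec]
    have valeq : Fd t
        = ∑ a, (xd t a * (∑ b, X a b * x t b) + x t a * ∑ b, X a b * xd t b) := by
      simp [hFddef, dotProduct, Matrix.mulVec, Finset.sum_add_distrib]
    rw [funeq, valeq]
    exact hprod
  have hFdc : ContinuousOn Fd (Set.Ici 0) :=
    (contOn_dp hxdc (contOn_mulVec_s10 X hxc)).add (contOn_dp hxc (contOn_mulVec_s10 X hxdc))
  have hFdint : IntervalIntegrable Fd MeasureTheory.volume 0 T₀ :=
    (hFdc.mono hsub).intervalIntegrable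
  have hFTC : ∫ t in (0:ℝ)..T₀, Fd t = F T₀ - F 0 :=
    intervalIntegral.integral_eq_sub_of_hasDerivAt hF hFdint
  set h1 : Fin k → ℝ → ℝ := fun j t =>
    (∑ a, ξ j t a ^ 2) - ∑ a, ((C₁ j *ᵥ x t + D₁ j *ᵥ u t) a) ^ 2 with hh1
  set h2 : Fin g → ℝ → ℝ := fun i t =>
    (∑ a, ξbar i t a ^ 2) -
      ∑ a, ((C₂bar i *ᵥ x t + D₂bar i *ᵥ u t + D₁₁ i *ᵥ ξbar i t) a) ^ 2 with hh2
  have hζc : ∀ j, ContinuousOn (fun t => C₁ j *ᵥ x t + D₁ j *ᵥ u t) (Set.Ici 0) :=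
    fun j => (contOn_mulVec_s10 _ hxc).add (contOn_mulVec_s10 _ huc)
  have hζbc : ∀ i, ContinuousOn
      (fun t => C₂bar i *ᵥ x t + D₂bar i *ᵥ u t + D₁₁ i *ᵥ ξbar i t) (Set.Ici 0) :=
    fun i => ((contOn_mulVec_s10 _ hxc).add (contOn_mulVec_s10 _ huc)).add
      (contOn_mulVec_s10 _ (hξbarc i))
  have h1c : ∀ j, ContinuousOn (h1 j) (Set.Ici 0) := by
    intro j
    have hc : ContinuousOn (fun t => ξ j t ⬝ᵥ ξ j t -
        (C₁ j *ᵥ x t + D₁ j *ᵥ u t) ⬝ᵥ (C₁ j *ᵥ x t + D₁ j *ᵥ u t)) (Set.Ici 0) :=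
      (contOn_dp (hξc j) (hξc j)).sub (contOn_dp (hζc j) (hζc j))
    exact hc.congr fun t _ => by simp only [hh1]; rw [sumsq, sumsq]
  have h2c : ∀ i, ContinuousOn (h2 i) (Set.Ici 0) := by
    intro i
    have hc : ContinuousOn (fun t => ξbar i t ⬝ᵥ ξbar i t -
        (C₂bar i *ᵥ x t + D₂bar i *ᵥ u t + D₁₁ i *ᵥ ξbar i t) ⬝ᵥ
          (C₂bar i *ᵥ x t + D₂bar i *ᵥ u t + D₁₁ i *ᵥ ξbar i t)) (Set.Ici 0) :=
      (contOn_dp (hξbarc i) (hξbarc i)).sub (contOn_dp (hζbc i) (hζbc i))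
    exact hc.congr fun t _ => by simp only [hh2]; rw [sumsq, sumsq]
  -- pointwise dissipation bound
  have key : ∀ t ∈ Set.Icc (0:ℝ) T₀,
      x t ⬝ᵥ (R *ᵥ x t) + u t ⬝ᵥ (G *ᵥ u t)
        ≤ -Fd t + ((∑ j, τ j * h1 j t) + ∑ i, h2 i t) := by
    intro t ht
    set b : ∀ i : Fin g, Fin (r i) → ℝ := fun i =>
      P i *ᵥ ξbar i t - (P i)⁻¹ *ᵥ ((D₁₁ i)ᵀ *ᵥ (C₂bar i *ᵥ x t + D₂bar i *ᵥ u t))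
      with hb
    have hbI : ∀ i, B₂check' i *ᵥ b i
        = B₂bar' i *ᵥ ξbar i t
          - ((B₂bar' i * (1 - (D₁₁ i)ᵀ * D₁₁ i)⁻¹ * (D₁₁ i)ᵀ * C₂bar i) *ᵥ x t
             + (B₂bar' i * (1 - (D₁₁ i)ᵀ * D₁₁ i)⁻¹ * (D₁₁ i)ᵀ * D₂bar i) *ᵥ u t) := by
      intro i
      simp only [hb]
      rw [hB₂check' i, loopshiftB (D₁₁ i) (P i) (hP i) (hP2 i), Matrix.mulVec_add,
        Matrix.mulVec_mulVec, Matrix.mulVec_mulVec]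
    have hshift : xd t = Acheck *ᵥ x t + (∑ j, B₁ j *ᵥ ξ j t)
        + (∑ i, B₂check' i *ᵥ b i) + B₂check *ᵥ u t := by
      simp only [hbI, hxddef, hAcheck, hB₂check]
      simp only [Matrix.add_mulVec, sum_mulVec'_s10, Finset.sum_sub_distrib,
        Finset.sum_add_distrib]
      abel
    have hcore := core Acheck B₁ C₁ D₁ B₂check' C₂check D₂check B₂check R G X K τ hτ
      Gτ hGτ Qτ hQτ Lτ hLτ Wτ hWτ hXs hBracket (x t) (fun j => ξ j t) b (u t) (hu t)
      (xd t) hshift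
    have hAi : ∀ i, b i ⬝ᵥ b i -
        (C₂check i *ᵥ x t + D₂check i *ᵥ u t) ⬝ᵥ
          (C₂check i *ᵥ x t + D₂check i *ᵥ u t) = h2 i t := by
      intro i
      have hz : C₂check i *ᵥ x t + D₂check i *ᵥ u t
          = (Q i)⁻¹ *ᵥ (C₂bar i *ᵥ x t + D₂bar i *ᵥ u t) := by
        rw [hC₂check i, hD₂check i, ← Matrix.mulVec_mulVec, ← Matrix.mulVec_mulVec,
          Matrix.mulVec_add]
      simp only [hb]
      rw [hz, loopshiftA (D₁₁ i) (P i) (Q i) (hD₁₁ i) (hP i) (hP2 i) (hQ i) (hQ2 i)]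
      simp only [hh2]
      rw [sumsq, sumsq]
    have hj : ∀ j, τ j * (ξ j t ⬝ᵥ ξ j t -
        (C₁ j *ᵥ x t + D₁ j *ᵥ u t) ⬝ᵥ (C₁ j *ᵥ x t + D₁ j *ᵥ u t)) = τ j * h1 j t := by
      intro j
      simp only [hh1]
      rw [sumsq, sumsq]
    simp only [hAi, hj] at hcore
    have : Fd t = xd t ⬝ᵥ (X *ᵥ x t) + x t ⬝ᵥ (X *ᵥ xd t) := by rw [hFddef]
    linarith [hcore]
  -- integrate
  have costc : ContinuousOn (fun t => x t ⬝ᵥ (R *ᵥ x t) + u t ⬝ᵥ (G *ᵥ u t))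
      (Set.Ici 0) :=
    (contOn_dp hxc (contOn_mulVec_s10 R hxc)).add (contOn_dp huc (contOn_mulVec_s10 G huc))
  have hint1 : IntervalIntegrable (fun t => x t ⬝ᵥ (R *ᵥ x t) + u t ⬝ᵥ (G *ᵥ u t))
      MeasureTheory.volume 0 T₀ := (costc.mono hsub).intervalIntegrable
  have h1int : ∀ j, IntervalIntegrable (h1 j) MeasureTheory.volume 0 T₀ :=
    fun j => (((h1c j).mono hsub)).intervalIntegrable
  have h2int : ∀ i, IntervalIntegrable (h2 i) MeasureTheory.volume 0 T₀ :=
    fun i => (((h2c i).mono hsub)).intervalIntegrable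
  have isum1 : IntervalIntegrable (fun t => ∑ j, τ j * h1 j t)
      MeasureTheory.volume 0 T₀ :=
    (((continuousOn_finset_sum _ fun j _ =>
      (continuousOn_const.mul (h1c j))).mono hsub)).intervalIntegrable
  have isum2 : IntervalIntegrable (fun t => ∑ i, h2 i t)
      MeasureTheory.volume 0 T₀ :=
    (((continuousOn_finset_sum _ fun i _ => (h2c i)).mono hsub)).intervalIntegrable
  have hint2 : IntervalIntegrable
      (fun t => -Fd t + ((∑ j, τ j * h1 j t) + ∑ i, h2 i t))
      MeasureTheory.volume 0 T₀ := (hFdint.neg).add (isum1.add isum2)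
  have step1 : (∫ t in (0:ℝ)..T₀, (x t ⬝ᵥ (R *ᵥ x t) + u t ⬝ᵥ (G *ᵥ u t)))
      ≤ ∫ t in (0:ℝ)..T₀, (-Fd t + ((∑ j, τ j * h1 j t) + ∑ i, h2 i t)) :=
    intervalIntegral.integral_mono_on hT₀ hint1 hint2 key
  have split : (∫ t in (0:ℝ)..T₀, (-Fd t + ((∑ j, τ j * h1 j t) + ∑ i, h2 i t)))
      = -(∫ t in (0:ℝ)..T₀, Fd t)
        + ((∑ j, τ j * ∫ t in (0:ℝ)..T₀, h1 j t)
           + ∑ i, ∫ t in (0:ℝ)..T₀, h2 i t) := by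
    have hneg : IntervalIntegrable (fun t => -Fd t) MeasureTheory.volume 0 T₀ :=
      hFdint.neg
    rw [intervalIntegral.integral_add hneg (isum1.add isum2),
      intervalIntegral.integral_neg,
      intervalIntegral.integral_add isum1 isum2,
      intervalIntegral.integral_finset_sum (fun j _ => (h1int j).const_mul (τ j)),
      intervalIntegral.integral_finset_sum (fun i _ => h2int i)]
    simp only [intervalIntegral.integral_const_mul]
  have hF0 : F 0 = x₀ ⬝ᵥ (X *ᵥ x₀) := by rw [hFdef]; simp [hx0]
  have hFT : 0 ≤ F T₀ := psd_nonneg hXpsd (x T₀)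
  have b1 : ∀ j, τ j * (∫ t in (0:ℝ)..T₀, h1 j t) ≤ τ j * (x₀ ⬝ᵥ (S₁ j *ᵥ x₀)) := by
    intro j
    refine mul_le_mul_of_nonneg_left ?_ (le_of_lt (hτ j))
    have := hIQC1 T₀ hT₀ j
    simpa only [hh1] using this
  have sumb1 : (∑ j, τ j * ∫ t in (0:ℝ)..T₀, h1 j t)
      ≤ ∑ j, τ j * (x₀ ⬝ᵥ (S₁ j *ᵥ x₀)) := Finset.sum_le_sum fun j _ => b1 j
  have sumb2 : (∑ i, ∫ t in (0:ℝ)..T₀, h2 i t) ≤ ∑ i, x₀ ⬝ᵥ (S₂ i *ᵥ x₀) := by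
    refine Finset.sum_le_sum fun i _ => ?_
    have := hIQC2 T₀ hT₀ i
    simpa only [hh2] using this
  have hFd0 : -(∫ t in (0:ℝ)..T₀, Fd t) ≤ x₀ ⬝ᵥ (X *ᵥ x₀) := by
    rw [hFTC]
    linarith [hFT, hF0.ge, hF0.le]
  rw [split] at step1
  linarith [step1, sumb1, sumb2, hFd0]
end
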